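/- arXiv:1808.08499 — 6 statements merged into one kernel-verified Lean document; each statement's English description precedes it below -/
import Mathlib

section
/- Estimate for the first auxiliary functional of the Cattaneo system: set Γ := τ + (1/δ²)(ρ₂ − bρ₁/k + τb₀ρ₃), χ_{0,τ} := (τ − ρ₁/(ρ₃k))(ρ₂ − bρ₁/k) − τρ₁δ²/(ρ₃k), and define J₁(t) = −τρ₂ Re(v ȳ) − (aτρ₁/k) Re(z ū) + (δρ₁Γ/k) Re(θ ū) − (τ/δ)(ρ₂ − bρ₁/k + τb₀ρ₃) Re(v q̄). Then for every ε > 0 there exists a constant C(ε) > 0, depending only on ε and the system parameters, such that for all t ≥ 0: (d/dt)J₁(t) + τk(1−ε)|v|² ≤ τρ₂|y|² + C(ε)ξ⁴|∫₀^∞ g(s)η(t,s)ds|² + χ_{0,τ} Re(iξ ū y) + (1/δ)(χ_{0,τ} + τb₀ρ₃(τ − ρ₁/(ρ₃k))) Re(iξ q ū) + (τ/δ)(ρ₂ − bρ₁/k + τb₀ρ₃) Re(y q̄) + C(ε)|q|². -/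
open MeasureTheory Filter Complex

private lemma hasDerivAt_cre {f : ℝ → ℂ} {f' : ℂ} {t : ℝ} (hf : HasDerivAt f f' t) :
    HasDerivAt (fun r => (f r).re) f'.re t :=
  (Complex.reCLM.hasFDerivAt.comp_hasDerivAt t hf)

private lemma young_ineq (A α : ℝ) (hα : 0 < α) (x y : ℂ) :
    A * (x * (starRingEnd ℂ) y).re ≤ α * ‖x‖^2 + (A^2/(4*α)) * ‖y‖^2 := by
  have hr : |(x * (starRingEnd ℂ) y).re| ≤ ‖x‖ * ‖y‖ := by
    have := Complex.abs_re_le_norm (x * (starRingEnd ℂ) y)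
    rwa [norm_mul, Complex.norm_conj] at this
  have h1 : A * (x * (starRingEnd ℂ) y).re ≤ |A| * (‖x‖ * ‖y‖) := by
    have := le_abs_self (A * (x * (starRingEnd ℂ) y).re)
    rw [abs_mul] at this
    exact this.trans (mul_le_mul_of_nonneg_left hr (abs_nonneg A))
  have hA : |A|^2 = A^2 := sq_abs A
  have h4 : 4*α*(α * ‖x‖^2 + A^2/(4*α) * ‖y‖^2
      - |A| * (‖x‖ * ‖y‖))
      = (2*α*‖x‖ - |A| * ‖y‖)^2 := by
    field_simp
    nlinarith [hA]
  have h5 := sq_nonneg (2*α*‖x‖ - |A| * ‖y‖)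
  rw [← h4] at h5
  nlinarith [h5, hα, h1]

set_option maxHeartbeats 2000000 in
private lemma key_identity (ρ₁ ρ₂ ρ₃ k b m δ β τ b₀ ξ : ℝ)
    (h1 : ρ₁ ≠ 0) (h2 : ρ₂ ≠ 0) (h3 : ρ₃ ≠ 0) (hk : k ≠ 0) (hδ : δ ≠ 0) (hτ : τ ≠ 0)
    (V U Z Y Θ Q G : ℂ) :
    -(τ*ρ₂) * (((Complex.I * (ξ:ℂ) * U - Y) * (starRingEnd ℂ) Y) + V * (starRingEnd ℂ) ((Complex.I * ((b - b₀ : ℝ):ℂ) * (ξ:ℂ) * Z - (m:ℂ) * (ξ:ℂ)^2 * G + (k:ℂ) * V - Complex.I * (δ:ℂ) * (ξ:ℂ) * Θ) / (ρ₂:ℂ))).re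
    - ((b - b₀)*τ*ρ₁/k) * (((Complex.I * (ξ:ℂ) * Y) * (starRingEnd ℂ) U) + Z * (starRingEnd ℂ) (Complex.I * (k:ℂ) * (ξ:ℂ) * V / (ρ₁:ℂ))).re
    + (δ*ρ₁*(τ + (1/δ^2)*(ρ₂ - b*ρ₁/k + τ*b₀*ρ₃))/k) * ((((-(Complex.I * (ξ:ℂ) * Q) - Complex.I * (δ:ℂ) * (ξ:ℂ) * Y) / (ρ₃:ℂ)) * (starRingEnd ℂ) U) + Θ * (starRingEnd ℂ) (Complex.I * (k:ℂ) * (ξ:ℂ) * V / (ρ₁:ℂ))).re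
    - ((τ/δ)*(ρ₂ - b*ρ₁/k + τ*b₀*ρ₃)) * (((Complex.I * (ξ:ℂ) * U - Y) * (starRingEnd ℂ) Q) + V * (starRingEnd ℂ) ((-((β:ℂ) * Q) - Complex.I * (ξ:ℂ) * Θ) / (τ:ℂ))).re
    =
    -(τ*k)*‖V‖^2 + τ*ρ₂*‖Y‖^2
    + ((τ - ρ₁/(ρ₃*k)) * (ρ₂ - b*ρ₁/k) - τ*ρ₁*δ^2/(ρ₃*k)) * (Complex.I * (ξ:ℂ) * (starRingEnd ℂ) U * Y).re
    + (1/δ)*((τ - ρ₁/(ρ₃*k)) * (ρ₂ - b*ρ₁/k) - τ*ρ₁*δ^2/(ρ₃*k) + τ*b₀*ρ₃*(τ - ρ₁/(ρ₃*k))) * (Complex.I * (ξ:ℂ) * Q * (starRingEnd ℂ) U).re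
    + (τ/δ)*(ρ₂ - b*ρ₁/k + τ*b₀*ρ₃) * (Y * (starRingEnd ℂ) Q).re
    + τ*m*ξ^2 * (V * (starRingEnd ℂ) G).re
    + ((ρ₂ - b*ρ₁/k + τ*b₀*ρ₃)*β/δ) * (V * (starRingEnd ℂ) Q).re := by
  simp only [map_div₀, map_sub, map_add, map_mul, map_neg, Complex.conj_I, Complex.conj_ofReal,
    map_pow, Complex.sq_norm, Complex.normSq_apply]
  simp only [Complex.add_re, Complex.sub_re, Complex.mul_re, Complex.mul_im, Complex.div_re,
    Complex.div_im, Complex.sub_im, Complex.add_im, Complex.neg_re, Complex.neg_im,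
    Complex.I_re, Complex.I_im, Complex.ofReal_re, Complex.ofReal_im, Complex.normSq_ofReal,
    Complex.conj_re, Complex.conj_im, Complex.ofReal_pow, pow_two]
  field_simp
  ring

set_option maxHeartbeats 1000000 in
theorem stmt3 (ρ₁ ρ₂ ρ₃ k b m δ β τ k₁ k₂ b₀ : ℝ)
    (hρ₁ : 0 < ρ₁) (hρ₂ : 0 < ρ₂) (hρ₃ : 0 < ρ₃) (hk : 0 < k) (hb : 0 < b)
    (hm : 0 < m) (hδ : 0 < δ) (hβ : 0 < β) (hτ : 0 < τ)
    (hk₁₂ : k₂ ≤ k₁) (hk₂ : 0 < k₂) (ha : 0 < b - b₀) :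
    ∀ ε : ℝ, 0 < ε → ∃ C > 0, ∀ (ξ : ℝ) (g g' : ℝ → ℝ) (v u z y θ q : ℝ → ℂ) (η ηt ηs : ℝ → ℝ → ℂ),
      (∀ s, 0 ≤ s → 0 ≤ g s) →
      (∀ s, 0 ≤ s → HasDerivAt g (g' s) s) →
      (∀ s, 0 ≤ s → -k₁ * g s ≤ g' s ∧ g' s ≤ -k₂ * g s) →
      (b₀ = ∫ s in Set.Ici (0:ℝ), g s) →
      (∀ t, 0 ≤ t → HasDerivAt v (Complex.I * (ξ:ℂ) * u t - y t) t) →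
      (∀ t, 0 ≤ t → HasDerivAt u (Complex.I * (k:ℂ) * (ξ:ℂ) * v t / (ρ₁:ℂ)) t) →
      (∀ t, 0 ≤ t → HasDerivAt z (Complex.I * (ξ:ℂ) * y t) t) →
      (∀ t, 0 ≤ t → HasDerivAt y ((Complex.I * ((b - b₀ : ℝ):ℂ) * (ξ:ℂ) * z t - (m:ℂ) * (ξ:ℂ)^2 * (∫ s in Set.Ici (0:ℝ), (g s : ℂ) * η t s) + (k:ℂ) * v t - Complex.I * (δ:ℂ) * (ξ:ℂ) * θ t) / (ρ₂:ℂ)) t) →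
      (∀ t, 0 ≤ t → HasDerivAt θ ((-(Complex.I * (ξ:ℂ) * q t) - Complex.I * (δ:ℂ) * (ξ:ℂ) * y t) / (ρ₃:ℂ)) t) →
      (∀ t, 0 ≤ t → HasDerivAt q ((-((β:ℂ) * q t) - Complex.I * (ξ:ℂ) * θ t) / (τ:ℂ)) t) →
      (∀ t s, 0 ≤ t → 0 ≤ s → HasDerivAt (fun r => η r s) (ηt t s) t) →
      (∀ t s, 0 ≤ t → 0 ≤ s → HasDerivAt (fun r => η t r) (ηs t s) s) →
      (Continuous (Function.uncurry ηt)) →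
      (Continuous (Function.uncurry ηs)) →
      (∀ t s, 0 ≤ t → 0 ≤ s → ηt t s + ηs t s = y t) →
      (∀ t, 0 ≤ t → η t 0 = 0) →
      (∀ t, 0 ≤ t → MeasureTheory.IntegrableOn (fun s => g s * ‖η t s‖^2) (Set.Ici 0)) →
      (∀ t, 0 ≤ t → MeasureTheory.IntegrableOn (fun s => (g s : ℂ) * η t s) (Set.Ici 0)) →
      (∀ t, 0 ≤ t → Filter.Tendsto (fun s => g s * ‖η t s‖^2) Filter.atTop (nhds 0)) →
      (∀ t, 0 ≤ t → HasDerivAt (fun r => ∫ s in Set.Ici (0:ℝ), g s * ‖η r s‖^2) (∫ s in Set.Ici (0:ℝ), g s * (2 * (ηt t s * (starRingEnd ℂ) (η t s)).re)) t) →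
      ∀ t, 0 ≤ t → ∃ d : ℝ,
        HasDerivAt (fun r => -(τ*ρ₂) * (v r * (starRingEnd ℂ) (y r)).re - ((b - b₀)*τ*ρ₁/k) * (z r * (starRingEnd ℂ) (u r)).re + (δ*ρ₁*(τ + (1/δ^2)*(ρ₂ - b*ρ₁/k + τ*b₀*ρ₃))/k) * (θ r * (starRingEnd ℂ) (u r)).re - ((τ/δ)*(ρ₂ - b*ρ₁/k + τ*b₀*ρ₃)) * (v r * (starRingEnd ℂ) (q r)).re) d t ∧
        d + τ*k*(1-ε)*‖v t‖^2 ≤ τ*ρ₂*‖y t‖^2 + C*ξ^4*‖∫ s in Set.Ici (0:ℝ), (g s : ℂ) * η t s‖^2 + ((τ - ρ₁/(ρ₃*k)) * (ρ₂ - b*ρ₁/k) - τ*ρ₁*δ^2/(ρ₃*k)) * (Complex.I * (ξ:ℂ) * (starRingEnd ℂ) (u t) * y t).re + (1/δ)*((τ - ρ₁/(ρ₃*k)) * (ρ₂ - b*ρ₁/k) - τ*ρ₁*δ^2/(ρ₃*k) + τ*b₀*ρ₃*(τ - ρ₁/(ρ₃*k))) * (Complex.I * (ξ:ℂ) * q t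 * (starRingEnd ℂ) (u t)).re + (τ/δ)*(ρ₂ - b*ρ₁/k + τ*b₀*ρ₃) * (y t * (starRingEnd ℂ) (q t)).re + C*‖q t‖^2 := by
  intro ε hε
  refine ⟨τ*m^2/(2*k*ε) + ((ρ₂ - b*ρ₁/k + τ*b₀*ρ₃)*β/δ)^2/(2*τ*k*ε) + 1, by positivity, ?_⟩
  intro ξ g g' v u z y θ q η ηt ηs _ _ _ _ hv hu hz hy hθ hq _ _ _ _ _ _ _ _ _ _ t ht
  set C : ℝ := τ*m^2/(2*k*ε) + ((ρ₂ - b*ρ₁/k + τ*b₀*ρ₃)*β/δ)^2/(2*τ*k*ε) + 1 with hC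
  have H1 : HasDerivAt (fun r => (v r * (starRingEnd ℂ) (y r)).re)
      ((((Complex.I * (ξ:ℂ) * u t - y t) * (starRingEnd ℂ) (y t)) + v t * (starRingEnd ℂ) ((Complex.I * ((b - b₀ : ℝ):ℂ) * (ξ:ℂ) * z t - (m:ℂ) * (ξ:ℂ)^2 * (∫ s in Set.Ici (0:ℝ), (g s : ℂ) * η t s) + (k:ℂ) * v t - Complex.I * (δ:ℂ) * (ξ:ℂ) * θ t) / (ρ₂:ℂ))).re) t :=
    hasDerivAt_cre ((hv t ht).mul ((hy t ht).star))
  have H2 : HasDerivAt (fun r => (z r * (starRingEnd ℂ) (u r)).re)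
      ((((Complex.I * (ξ:ℂ) * y t) * (starRingEnd ℂ) (u t)) + z t * (starRingEnd ℂ) (Complex.I * (k:ℂ) * (ξ:ℂ) * v t / (ρ₁:ℂ))).re) t :=
    hasDerivAt_cre ((hz t ht).mul ((hu t ht).star))
  have H3 : HasDerivAt (fun r => (θ r * (starRingEnd ℂ) (u r)).re)
      (((((-(Complex.I * (ξ:ℂ) * q t) - Complex.I * (δ:ℂ) * (ξ:ℂ) * y t) / (ρ₃:ℂ)) * (starRingEnd ℂ) (u t)) + θ t * (starRingEnd ℂ) (Complex.I * (k:ℂ) * (ξ:ℂ) * v t / (ρ₁:ℂ))).re) t :=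
    hasDerivAt_cre ((hθ t ht).mul ((hu t ht).star))
  have H4 : HasDerivAt (fun r => (v r * (starRingEnd ℂ) (q r)).re)
      ((((Complex.I * (ξ:ℂ) * u t - y t) * (starRingEnd ℂ) (q t)) + v t * (starRingEnd ℂ) ((-((β:ℂ) * q t) - Complex.I * (ξ:ℂ) * θ t) / (τ:ℂ))).re) t :=
    hasDerivAt_cre ((hv t ht).mul ((hq t ht).star))
  have HJ := (((H1.const_mul (-(τ*ρ₂))).sub (H2.const_mul ((b - b₀)*τ*ρ₁/k))).add
      (H3.const_mul (δ*ρ₁*(τ + (1/δ^2)*(ρ₂ - b*ρ₁/k + τ*b₀*ρ₃))/k))).sub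
      (H4.const_mul ((τ/δ)*(ρ₂ - b*ρ₁/k + τ*b₀*ρ₃)))
  refine ⟨_, HJ, ?_⟩
  have hEq := key_identity ρ₁ ρ₂ ρ₃ k b m δ β τ b₀ ξ
    hρ₁.ne' hρ₂.ne' hρ₃.ne' hk.ne' hδ.ne' hτ.ne'
    (v t) (u t) (z t) (y t) (θ t) (q t) (∫ s in Set.Ici (0:ℝ), (g s : ℂ) * η t s)
  rw [show -(τ*ρ₂) * (((Complex.I * (ξ:ℂ) * u t - y t) * (starRingEnd ℂ) (y t)) + v t * (starRingEnd ℂ) ((Complex.I * ((b - b₀ : ℝ):ℂ) * (ξ:ℂ) * z t - (m:ℂ) * (ξ:ℂ)^2 * (∫ s in Set.Ici (0:ℝ), (g s : ℂ) * η t s) + (k:ℂ) * v t - Complex.I * (δ:ℂ) * (ξ:ℂ) * θ t) / (ρ₂:ℂ))).re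
    - ((b - b₀)*τ*ρ₁/k) * (((Complex.I * (ξ:ℂ) * y t) * (starRingEnd ℂ) (u t)) + z t * (starRingEnd ℂ) (Complex.I * (k:ℂ) * (ξ:ℂ) * v t / (ρ₁:ℂ))).re
    + (δ*ρ₁*(τ + (1/δ^2)*(ρ₂ - b*ρ₁/k + τ*b₀*ρ₃))/k) * ((((-(Complex.I * (ξ:ℂ) * q t) - Complex.I * (δ:ℂ) * (ξ:ℂ) * y t) / (ρ₃:ℂ)) * (starRingEnd ℂ) (u t)) + θ t * (starRingEnd ℂ) (Complex.I * (k:ℂ) * (ξ:ℂ) * v t / (ρ₁:ℂ))).re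
    - ((τ/δ)*(ρ₂ - b*ρ₁/k + τ*b₀*ρ₃)) * (((Complex.I * (ξ:ℂ) * u t - y t) * (starRingEnd ℂ) (q t)) + v t * (starRingEnd ℂ) ((-((β:ℂ) * q t) - Complex.I * (ξ:ℂ) * θ t) / (τ:ℂ))).re
    = -(τ*k)*‖v t‖^2 + τ*ρ₂*‖y t‖^2
    + ((τ - ρ₁/(ρ₃*k)) * (ρ₂ - b*ρ₁/k) - τ*ρ₁*δ^2/(ρ₃*k)) * (Complex.I * (ξ:ℂ) * (starRingEnd ℂ) (u t) * y t).re
    + (1/δ)*((τ - ρ₁/(ρ₃*k)) * (ρ₂ - b*ρ₁/k) - τ*ρ₁*δ^2/(ρ₃*k) + τ*b₀*ρ₃*(τ - ρ₁/(ρ₃*k))) * (Complex.I * (ξ:ℂ) * q t * (starRingEnd ℂ) (u t)).re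
    + (τ/δ)*(ρ₂ - b*ρ₁/k + τ*b₀*ρ₃) * (y t * (starRingEnd ℂ) (q t)).re
    + τ*m*ξ^2 * (v t * (starRingEnd ℂ) (∫ s in Set.Ici (0:ℝ), (g s : ℂ) * η t s)).re
    + ((ρ₂ - b*ρ₁/k + τ*b₀*ρ₃)*β/δ) * (v t * (starRingEnd ℂ) (q t)).re from hEq]
  have hα : (0:ℝ) < τ*k*ε/2 := by positivity
  have y1 := young_ineq (τ*m*ξ^2) (τ*k*ε/2) hα (v t) (∫ s in Set.Ici (0:ℝ), (g s : ℂ) * η t s)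
  have y2 := young_ineq ((ρ₂ - b*ρ₁/k + τ*b₀*ρ₃)*β/δ) (τ*k*ε/2) hα (v t) (q t)
  have hC2 : τ*m^2/(2*k*ε) ≤ C := by
    have : (0:ℝ) ≤ ((ρ₂ - b*ρ₁/k + τ*b₀*ρ₃)*β/δ)^2/(2*τ*k*ε) + 1 := by positivity
    rw [hC]; linarith
  have hC3 : ((ρ₂ - b*ρ₁/k + τ*b₀*ρ₃)*β/δ)^2/(2*τ*k*ε) ≤ C := by
    have : (0:ℝ) ≤ τ*m^2/(2*k*ε) + 1 := by positivity
    rw [hC]; linarith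
  have e1 : (τ*m*ξ^2)^2/(4*(τ*k*ε/2)) * ‖∫ s in Set.Ici (0:ℝ), (g s : ℂ) * η t s‖^2
      ≤ C * ξ^4 * ‖∫ s in Set.Ici (0:ℝ), (g s : ℂ) * η t s‖^2 := by
    have h : (τ*m*ξ^2)^2/(4*(τ*k*ε/2)) = τ*m^2/(2*k*ε) * ξ^4 := by
      field_simp; ring
    rw [h]
    have := mul_le_mul_of_nonneg_right hC2
      (show (0:ℝ) ≤ ξ^4 * ‖∫ s in Set.Ici (0:ℝ), (g s : ℂ) * η t s‖^2 by positivity)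
    linarith [this]
  have e2 : ((ρ₂ - b*ρ₁/k + τ*b₀*ρ₃)*β/δ)^2/(4*(τ*k*ε/2)) * ‖q t‖^2
      ≤ C * ‖q t‖^2 := by
    have h : ((ρ₂ - b*ρ₁/k + τ*b₀*ρ₃)*β/δ)^2/(4*(τ*k*ε/2))
        = ((ρ₂ - b*ρ₁/k + τ*b₀*ρ₃)*β/δ)^2/(2*τ*k*ε) := by ring_nf
    rw [h]
    have := mul_le_mul_of_nonneg_right hC3 (show (0:ℝ) ≤ ‖q t‖^2 by positivity)
    linarith [this]
  have habs : (0:ℝ) ≤ ‖v t‖^2 := by positivity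
  nlinarith [y1, y2, e1, e2, mul_pos (mul_pos hτ hk) hε, habs,
    mul_nonneg (mul_pos (mul_pos hτ hk) hε).le habs]
end

section
/- Estimate for the second auxiliary functional of the Cattaneo system: define J₂(t) = ρ₁ Re(iξ v ū) + ρ₂ Re(iξ y z̄) + δτ Re(iξ z q̄). Then for every ε > 0 there exists a constant C(ε) > 0, depending only on ε and the system parameters, such that for all t ≥ 0: (d/dt)J₂(t) + ρ₁(1−ε)ξ²|u|² + a(1−ε)ξ²|z|² ≤ C(ε)(1+ξ²)|v|² + C(ε)(1+ξ²)|y|² + C(ε)(1+ξ²)|q|² + C(ε)ξ⁴|∫₀^∞ g(s)η(t,s)ds|². -/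
open MeasureTheory Filter Complex

set_option maxHeartbeats 2000000

private lemma young_aux (α X Y : ℝ) (hα : 0 < α) : X*Y ≤ α*X^2 + Y^2/(4*α) := by
  rw [← sub_nonneg]
  have h : α*X^2 + Y^2/(4*α) - X*Y = (2*α*X - Y)^2/(4*α) := by
    field_simp
    ring
  rw [h]
  positivity

private lemma cross_bound (c ξ R xx yy γ : ℝ) (hγ : 0 < γ) (hc : 0 ≤ c)
    (hR : |R| ≤ xx*yy) :
    -(c*(ξ*R)) ≤ γ*(ξ^2*xx^2) + (c^2/(4*γ))*yy^2 := by
  have h1 : -(ξ*R) ≤ (|ξ| * xx)*yy := by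
    calc -(ξ*R) ≤ |ξ*R| := neg_le_abs _
      _ = |ξ| * |R| := abs_mul ξ R
      _ ≤ |ξ| * (xx*yy) := mul_le_mul_of_nonneg_left hR (abs_nonneg ξ)
      _ = (|ξ| * xx)*yy := by ring
  have h2 := young_aux γ (|ξ| * xx) (c*yy) hγ
  have h3 : γ*((|ξ| * xx)^2) = γ*(ξ^2*xx^2) := by rw [mul_pow, _root_.sq_abs]
  have h4 := mul_le_mul_of_nonneg_left h1 hc
  have h5 : (c*yy)^2/(4*γ) = (c^2/(4*γ))*yy^2 := by ring
  nlinarith [h2, h3, h4, h5]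

private lemma re_abs_bound (w1 w2 : ℂ) :
    |(Complex.I * w1 * (starRingEnd ℂ) w2).re| ≤ ‖w1‖ * ‖w2‖ := by
  calc |(Complex.I * w1 * (starRingEnd ℂ) w2).re|
      ≤ ‖Complex.I * w1 * (starRingEnd ℂ) w2‖ := Complex.abs_re_le_norm _
    _ = ‖w1‖ * ‖w2‖ := by
        simp [map_mul, Complex.norm_conj]

private lemma re_abs_bound' (w1 w2 : ℂ) :
    |(w1 * (starRingEnd ℂ) w2).re| ≤ ‖w1‖ * ‖w2‖ := by
  calc |(w1 * (starRingEnd ℂ) w2).re|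
      ≤ ‖w1 * (starRingEnd ℂ) w2‖ := Complex.abs_re_le_norm _
    _ = ‖w1‖ * ‖w2‖ := by
        simp [map_mul, Complex.norm_conj]

private lemma d_identity (ρ₁ ρ₂ k m δ β τ a ξ : ℝ) (hρ₁ : ρ₁ ≠ 0) (hρ₂ : ρ₂ ≠ 0) (hτ : τ ≠ 0)
    (v u z y θ q G : ℂ) :
    ρ₁ * (Complex.I*ξ*(Complex.I*ξ*u - y) * (starRingEnd ℂ) u + Complex.I*ξ*v * (starRingEnd ℂ) (Complex.I*k*ξ*v/ρ₁)).re
  + ρ₂ * (Complex.I*ξ*((Complex.I * (a:ℂ) * ξ * z - m * (ξ:ℂ)^2 * G + k * v - Complex.I * δ * ξ * θ)/ρ₂) * (starRingEnd ℂ) z + Complex.I*ξ*y * (starRingEnd ℂ) (Complex.I*ξ*y)).re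
  + δ*τ * (Complex.I*ξ*(Complex.I*ξ*y) * (starRingEnd ℂ) q + Complex.I*ξ*z * (starRingEnd ℂ) ((-((β:ℂ) * q) - Complex.I * ξ * θ)/τ)).re
  = k*ξ^2*‖v‖^2 - ρ₁*ξ^2*‖u‖^2 - a*ξ^2*‖z‖^2 + ρ₂*ξ^2*‖y‖^2
    - ρ₁*(ξ*(Complex.I*y*(starRingEnd ℂ) u).re) - m*(ξ*(ξ^2*(Complex.I*G*(starRingEnd ℂ) z).re))
    - k*(ξ*(-(Complex.I*v*(starRingEnd ℂ) z).re)) - δ*τ*(ξ*(ξ*(y*(starRingEnd ℂ) q).re))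
    - δ*β*(ξ*(Complex.I*z*(starRingEnd ℂ) q).re) := by
  simp only [Complex.sq_norm, Complex.normSq_apply, Complex.mul_re, Complex.mul_im,
    Complex.div_re, Complex.div_im, Complex.add_re, Complex.add_im, Complex.sub_re,
    Complex.sub_im, Complex.neg_re, Complex.neg_im, Complex.I_re, Complex.I_im,
    Complex.ofReal_re, Complex.ofReal_im, Complex.conj_re, Complex.conj_im,
    Complex.normSq_apply, ← Complex.ofReal_pow]
  field_simp
  ring

private lemma hasDerivAt_conj {f : ℝ → ℂ} {f' : ℂ} {x : ℝ} (h : HasDerivAt f f' x) :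
    HasDerivAt (fun r => (starRingEnd ℂ) (f r)) ((starRingEnd ℂ) f') x :=
  Complex.conjCLE.hasFDerivAt.comp_hasDerivAt x h

private lemma hasDerivAt_re {f : ℝ → ℂ} {f' : ℂ} {x : ℝ} (h : HasDerivAt f f' x) :
    HasDerivAt (fun r => (f r).re) f'.re x :=
  Complex.reCLM.hasFDerivAt.comp_hasDerivAt x h

theorem stmt4 (ρ₁ ρ₂ ρ₃ k b m δ β τ k₁ k₂ b₀ : ℝ)
    (hρ₁ : 0 < ρ₁) (hρ₂ : 0 < ρ₂) (hρ₃ : 0 < ρ₃) (hk : 0 < k) (hb : 0 < b)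
    (hm : 0 < m) (hδ : 0 < δ) (hβ : 0 < β) (hτ : 0 < τ)
    (hk₁₂ : k₂ ≤ k₁) (hk₂ : 0 < k₂) (ha : 0 < b - b₀) :
    ∀ ε : ℝ, 0 < ε → ∃ C > 0, ∀ (ξ : ℝ) (g g' : ℝ → ℝ) (v u z y θ q : ℝ → ℂ) (η ηt ηs : ℝ → ℝ → ℂ),
      (∀ s, 0 ≤ s → 0 ≤ g s) →
      (∀ s, 0 ≤ s → HasDerivAt g (g' s) s) →
      (∀ s, 0 ≤ s → -k₁ * g s ≤ g' s ∧ g' s ≤ -k₂ * g s) →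
      (b₀ = ∫ s in Set.Ici (0:ℝ), g s) →
      (∀ t, 0 ≤ t → HasDerivAt v (Complex.I * (ξ:ℂ) * u t - y t) t) →
      (∀ t, 0 ≤ t → HasDerivAt u (Complex.I * (k:ℂ) * (ξ:ℂ) * v t / (ρ₁:ℂ)) t) →
      (∀ t, 0 ≤ t → HasDerivAt z (Complex.I * (ξ:ℂ) * y t) t) →
      (∀ t, 0 ≤ t → HasDerivAt y ((Complex.I * ((b - b₀ : ℝ):ℂ) * (ξ:ℂ) * z t - (m:ℂ) * (ξ:ℂ)^2 * (∫ s in Set.Ici (0:ℝ), (g s : ℂ) * η t s) + (k:ℂ) * v t - Complex.I * (δ:ℂ) * (ξ:ℂ) * θ t) / (ρ₂:ℂ)) t) →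
      (∀ t, 0 ≤ t → HasDerivAt θ ((-(Complex.I * (ξ:ℂ) * q t) - Complex.I * (δ:ℂ) * (ξ:ℂ) * y t) / (ρ₃:ℂ)) t) →
      (∀ t, 0 ≤ t → HasDerivAt q ((-((β:ℂ) * q t) - Complex.I * (ξ:ℂ) * θ t) / (τ:ℂ)) t) →
      (∀ t s, 0 ≤ t → 0 ≤ s → HasDerivAt (fun r => η r s) (ηt t s) t) →
      (∀ t s, 0 ≤ t → 0 ≤ s → HasDerivAt (fun r => η t r) (ηs t s) s) →
      (Continuous (Function.uncurry ηt)) →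
      (Continuous (Function.uncurry ηs)) →
      (∀ t s, 0 ≤ t → 0 ≤ s → ηt t s + ηs t s = y t) →
      (∀ t, 0 ≤ t → η t 0 = 0) →
      (∀ t, 0 ≤ t → MeasureTheory.IntegrableOn (fun s => g s * ‖η t s‖^2) (Set.Ici 0)) →
      (∀ t, 0 ≤ t → MeasureTheory.IntegrableOn (fun s => (g s : ℂ) * η t s) (Set.Ici 0)) →
      (∀ t, 0 ≤ t → Filter.Tendsto (fun s => g s * ‖η t s‖^2) Filter.atTop (nhds 0)) →
      (∀ t, 0 ≤ t → HasDerivAt (fun r => ∫ s in Set.Ici (0:ℝ), g s * ‖η r s‖^2) (∫ s in Set.Ici (0:ℝ), g s * (2 * (ηt t s * (starRingEnd ℂ) (η t s)).re)) t) →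
      ∀ t, 0 ≤ t → ∃ d : ℝ,
        HasDerivAt (fun r => ρ₁ * (Complex.I * (ξ:ℂ) * v r * (starRingEnd ℂ) (u r)).re + ρ₂ * (Complex.I * (ξ:ℂ) * y r * (starRingEnd ℂ) (z r)).re + δ*τ * (Complex.I * (ξ:ℂ) * z r * (starRingEnd ℂ) (q r)).re) d t ∧
        d + ρ₁*(1-ε)*ξ^2*‖u t‖^2 + (b - b₀)*(1-ε)*ξ^2*‖z t‖^2 ≤ C*(1+ξ^2)*‖v t‖^2 + C*(1+ξ^2)*‖y t‖^2 + C*(1+ξ^2)*‖q t‖^2 + C*ξ^4*‖∫ s in Set.Ici (0:ℝ), (g s : ℂ) * η t s‖^2 := by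
  intro ε hε
  have haε : (0:ℝ) < (b - b₀)*ε/3 := by
    have := mul_pos ha hε
    linarith
  refine ⟨k + k^2/(4*((b-b₀)*ε/3)) + ρ₂ + 1/2 + ρ₁^2/(4*(ρ₁*ε)) + (δ*τ)^2/(4*(1/2))
      + (δ*β)^2/(4*((b-b₀)*ε/3)) + m^2/(4*((b-b₀)*ε/3)) + 1, ?_, ?_⟩
  · have h1 : (0:ℝ) ≤ k^2/(4*((b-b₀)*ε/3)) := by positivity
    have h2 : (0:ℝ) ≤ ρ₁^2/(4*(ρ₁*ε)) := by positivity
    have h3 : (0:ℝ) ≤ (δ*τ)^2/(4*(1/2)) := by positivity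
    have h4 : (0:ℝ) ≤ (δ*β)^2/(4*((b-b₀)*ε/3)) := by positivity
    have h5 : (0:ℝ) ≤ m^2/(4*((b-b₀)*ε/3)) := by positivity
    linarith
  intro ξ g g' v u z y θ q η ηt ηs hg hgd hgb hb0 hv hu hz hy hθ hq hηt hηs hct hcs hsys hη0 hint1 hint2 htend hdint t ht
  set C : ℝ := k + k^2/(4*((b-b₀)*ε/3)) + ρ₂ + 1/2 + ρ₁^2/(4*(ρ₁*ε)) + (δ*τ)^2/(4*(1/2))
      + (δ*β)^2/(4*((b-b₀)*ε/3)) + m^2/(4*((b-b₀)*ε/3)) + 1 with hC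
  set Gc : ℂ := ∫ s in Set.Ici (0:ℝ), (g s : ℂ) * η t s with hGc
  -- derivatives
  have hA : HasDerivAt (fun r => (Complex.I * (ξ:ℂ) * v r * (starRingEnd ℂ) (u r)).re)
      ((Complex.I * (ξ:ℂ) * (Complex.I * (ξ:ℂ) * u t - y t) * (starRingEnd ℂ) (u t)
        + Complex.I * (ξ:ℂ) * v t * (starRingEnd ℂ) (Complex.I * (k:ℂ) * (ξ:ℂ) * v t / (ρ₁:ℂ))).re) t :=
    hasDerivAt_re ((HasDerivAt.const_mul (Complex.I * (ξ:ℂ)) (hv t ht)).mul (hasDerivAt_conj (hu t ht)))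
  have hB : HasDerivAt (fun r => (Complex.I * (ξ:ℂ) * y r * (starRingEnd ℂ) (z r)).re)
      ((Complex.I * (ξ:ℂ) * ((Complex.I * ((b - b₀ : ℝ):ℂ) * (ξ:ℂ) * z t - (m:ℂ) * (ξ:ℂ)^2 * Gc + (k:ℂ) * v t - Complex.I * (δ:ℂ) * (ξ:ℂ) * θ t) / (ρ₂:ℂ)) * (starRingEnd ℂ) (z t)
        + Complex.I * (ξ:ℂ) * y t * (starRingEnd ℂ) (Complex.I * (ξ:ℂ) * y t)).re) t :=
    hasDerivAt_re ((HasDerivAt.const_mul (Complex.I * (ξ:ℂ)) (hy t ht)).mul (hasDerivAt_conj (hz t ht)))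
  have hCd : HasDerivAt (fun r => (Complex.I * (ξ:ℂ) * z r * (starRingEnd ℂ) (q r)).re)
      ((Complex.I * (ξ:ℂ) * (Complex.I * (ξ:ℂ) * y t) * (starRingEnd ℂ) (q t)
        + Complex.I * (ξ:ℂ) * z t * (starRingEnd ℂ) ((-((β:ℂ) * q t) - Complex.I * (ξ:ℂ) * θ t) / (τ:ℂ))).re) t :=
    hasDerivAt_re ((HasDerivAt.const_mul (Complex.I * (ξ:ℂ)) (hz t ht)).mul (hasDerivAt_conj (hq t ht)))
  refine ⟨_, ((hA.const_mul ρ₁).add (hB.const_mul ρ₂)).add (hCd.const_mul (δ*τ)), ?_⟩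
  -- the identity
  have hid := d_identity ρ₁ ρ₂ k m δ β τ (b - b₀) ξ (ne_of_gt hρ₁) (ne_of_gt hρ₂) (ne_of_gt hτ)
    (v t) (u t) (z t) (y t) (θ t) (q t) Gc
  set U := ‖u t‖
  set V := ‖v t‖
  set Z := ‖z t‖
  set Y := ‖y t‖
  set Q := ‖q t‖
  set G := ‖Gc‖
  set R1 := (Complex.I * y t * (starRingEnd ℂ) (u t)).re
  set R2 := (Complex.I * Gc * (starRingEnd ℂ) (z t)).re
  set R3 := (Complex.I * v t * (starRingEnd ℂ) (z t)).re
  set R4 := (y t * (starRingEnd ℂ) (q t)).re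
  set R5 := (Complex.I * z t * (starRingEnd ℂ) (q t)).re
  -- cross term bounds
  have b1 : -(ρ₁*(ξ*R1)) ≤ (ρ₁*ε)*(ξ^2*U^2) + (ρ₁^2/(4*(ρ₁*ε)))*Y^2 := by
    refine cross_bound ρ₁ ξ R1 U Y (ρ₁*ε) (by positivity) hρ₁.le ?_
    have := re_abs_bound (y t) (u t); nlinarith [this]
  have b2 : -(m*(ξ*(ξ^2*R2))) ≤ ((b-b₀)*ε/3)*(ξ^2*Z^2) + (m^2/(4*((b-b₀)*ε/3)))*(ξ^2*G)^2 := by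
    refine cross_bound m ξ (ξ^2*R2) Z (ξ^2*G) ((b-b₀)*ε/3) haε hm.le ?_
    have h := re_abs_bound Gc (z t)
    have he : |ξ^2*R2| = ξ^2*|R2| := by rw [abs_mul, _root_.abs_of_nonneg (sq_nonneg ξ)]
    rw [he]
    nlinarith [mul_le_mul_of_nonneg_left h (sq_nonneg ξ)]
  have b3 : -(k*(ξ*(-R3))) ≤ ((b-b₀)*ε/3)*(ξ^2*Z^2) + (k^2/(4*((b-b₀)*ε/3)))*V^2 := by
    refine cross_bound k ξ (-R3) Z V ((b-b₀)*ε/3) haε hk.le ?_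
    rw [abs_neg]
    have := re_abs_bound (v t) (z t); nlinarith [this]
  have b4 : -((δ*τ)*(ξ*(ξ*R4))) ≤ (1/2)*(ξ^2*Y^2) + ((δ*τ)^2/(4*(1/2)))*(|ξ| * Q)^2 := by
    refine cross_bound (δ*τ) ξ (ξ*R4) Y (|ξ| * Q) (1/2) (by norm_num) (by positivity) ?_
    have h := re_abs_bound' (y t) (q t)
    have he : |ξ*R4| = |ξ| * |R4| := abs_mul ξ R4
    rw [he]
    nlinarith [mul_le_mul_of_nonneg_left h (abs_nonneg ξ)]
  have hsq4 : ((δ*τ)^2/(4*(1/2)))*((|ξ| * Q)^2) = ((δ*τ)^2/(4*(1/2)))*(ξ^2*Q^2) := by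
    rw [mul_pow (|ξ|) Q 2, _root_.sq_abs]
  have b5 : -((δ*β)*(ξ*R5)) ≤ ((b-b₀)*ε/3)*(ξ^2*Z^2) + ((δ*β)^2/(4*((b-b₀)*ε/3)))*Q^2 := by
    refine cross_bound (δ*β) ξ R5 Z Q ((b-b₀)*ε/3) haε (by positivity) ?_
    have := re_abs_bound (z t) (q t); nlinarith [this]
  -- coefficient facts
  have hC1 : (0:ℝ) ≤ k^2/(4*((b-b₀)*ε/3)) := by positivity
  have hC2 : (0:ℝ) ≤ ρ₁^2/(4*(ρ₁*ε)) := by positivity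
  have hC3 : (0:ℝ) ≤ (δ*τ)^2/(4*(1/2)) := by positivity
  have hC4 : (0:ℝ) ≤ (δ*β)^2/(4*((b-b₀)*ε/3)) := by positivity
  have hC5 : (0:ℝ) ≤ m^2/(4*((b-b₀)*ε/3)) := by positivity
  have p1 : (0:ℝ) ≤ (C - k)*(ξ^2*V^2) := by
    refine mul_nonneg ?_ (by positivity)
    rw [hC]; linarith
  have p2 : (0:ℝ) ≤ (C - k^2/(4*((b-b₀)*ε/3)))*V^2 := by
    refine mul_nonneg ?_ (by positivity)
    rw [hC]; linarith
  have p3 : (0:ℝ) ≤ (C - (ρ₂ + 1/2))*(ξ^2*Y^2) := by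
    refine mul_nonneg ?_ (by positivity)
    rw [hC]; linarith
  have p4 : (0:ℝ) ≤ (C - ρ₁^2/(4*(ρ₁*ε)))*Y^2 := by
    refine mul_nonneg ?_ (by positivity)
    rw [hC]; linarith
  have p5 : (0:ℝ) ≤ (C - (δ*τ)^2/(4*(1/2)))*(ξ^2*Q^2) := by
    refine mul_nonneg ?_ (by positivity)
    rw [hC]; linarith
  have p6 : (0:ℝ) ≤ (C - (δ*β)^2/(4*((b-b₀)*ε/3)))*Q^2 := by
    refine mul_nonneg ?_ (by positivity)
    rw [hC]; linarith
  have p7 : (0:ℝ) ≤ (C - m^2/(4*((b-b₀)*ε/3)))*(ξ^4*G^2) := by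
    refine mul_nonneg ?_ (by positivity)
    rw [hC]; linarith
  rw [hid]
  clear_value C Gc U V Z Y Q G R1 R2 R3 R4 R5
  linarith only [b1, b2, b3, b4, hsq4, b5, p1, p2, p3, p4, p5, p6, p7]
end

section
/- Estimate for the thermal functional of the Cattaneo system: define J₄(t) = τρ₃ Re(iξ θ q̄). Then for every ε > 0 there exists a constant C(ε) > 0, depending only on ε and the system parameters, such that for all t ≥ 0: (d/dt)J₄(t) + ρ₃(1−ε)ξ²|θ|² ≤ τδξ²|y||q| + C(ε)(1+ξ²)|q|². -/
open MeasureTheory Filter Complex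

theorem stmt6 (ρ₁ ρ₂ ρ₃ k b m δ β τ k₁ k₂ b₀ : ℝ)
    (hρ₁ : 0 < ρ₁) (hρ₂ : 0 < ρ₂) (hρ₃ : 0 < ρ₃) (hk : 0 < k) (hb : 0 < b)
    (hm : 0 < m) (hδ : 0 < δ) (hβ : 0 < β) (hτ : 0 < τ)
    (hk₁₂ : k₂ ≤ k₁) (hk₂ : 0 < k₂) (ha : 0 < b - b₀) :
    ∀ ε : ℝ, 0 < ε → ∃ C > 0, ∀ (ξ : ℝ) (g g' : ℝ → ℝ) (v u z y θ q : ℝ → ℂ) (η ηt ηs : ℝ → ℝ → ℂ),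
      (∀ s, 0 ≤ s → 0 ≤ g s) →
      (∀ s, 0 ≤ s → HasDerivAt g (g' s) s) →
      (∀ s, 0 ≤ s → -k₁ * g s ≤ g' s ∧ g' s ≤ -k₂ * g s) →
      (b₀ = ∫ s in Set.Ici (0:ℝ), g s) →
      (∀ t, 0 ≤ t → HasDerivAt v (Complex.I * (ξ:ℂ) * u t - y t) t) →
      (∀ t, 0 ≤ t → HasDerivAt u (Complex.I * (k:ℂ) * (ξ:ℂ) * v t / (ρ₁:ℂ)) t) →
      (∀ t, 0 ≤ t → HasDerivAt z (Complex.I * (ξ:ℂ) * y t) t) →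
      (∀ t, 0 ≤ t → HasDerivAt y ((Complex.I * ((b - b₀ : ℝ):ℂ) * (ξ:ℂ) * z t - (m:ℂ) * (ξ:ℂ)^2 * (∫ s in Set.Ici (0:ℝ), (g s : ℂ) * η t s) + (k:ℂ) * v t - Complex.I * (δ:ℂ) * (ξ:ℂ) * θ t) / (ρ₂:ℂ)) t) →
      (∀ t, 0 ≤ t → HasDerivAt θ ((-(Complex.I * (ξ:ℂ) * q t) - Complex.I * (δ:ℂ) * (ξ:ℂ) * y t) / (ρ₃:ℂ)) t) →
      (∀ t, 0 ≤ t → HasDerivAt q ((-((β:ℂ) * q t) - Complex.I * (ξ:ℂ) * θ t) / (τ:ℂ)) t) →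
      (∀ t s, 0 ≤ t → 0 ≤ s → HasDerivAt (fun r => η r s) (ηt t s) t) →
      (∀ t s, 0 ≤ t → 0 ≤ s → HasDerivAt (fun r => η t r) (ηs t s) s) →
      (Continuous (Function.uncurry ηt)) →
      (Continuous (Function.uncurry ηs)) →
      (∀ t s, 0 ≤ t → 0 ≤ s → ηt t s + ηs t s = y t) →
      (∀ t, 0 ≤ t → η t 0 = 0) →
      ∀ t, 0 ≤ t → ∃ d : ℝ,
        HasDerivAt (fun r => τ*ρ₃ * (Complex.I * (ξ:ℂ) * θ r * (starRingEnd ℂ) (q r)).re) d t ∧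
        d + ρ₃*(1-ε)*ξ^2*‖θ t‖^2 ≤ τ*δ*ξ^2*‖y t‖*‖q t‖ + C*(1+ξ^2)*‖q t‖^2 := by
  intro ε hε
  refine ⟨τ + ρ₃*β^2/(4*ε), by positivity, ?_⟩
  intro ξ g g' v u z y θ q η ηt ηs _ _ _ _ _ _ _ _ hθ hq _ _ _ _ _ _ t ht
  have hθt := hθ t ht
  have hqt := hq t ht
  set θ' : ℂ := (-(Complex.I * (ξ:ℂ) * q t) - Complex.I * (δ:ℂ) * (ξ:ℂ) * y t) / (ρ₃:ℂ) with hθd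
  set q' : ℂ := (-((β:ℂ) * q t) - Complex.I * (ξ:ℂ) * θ t) / (τ:ℂ) with hqd
  have hqc : HasDerivAt (fun r => (starRingEnd ℂ) (q r)) ((starRingEnd ℂ) q') t := hqt.star
  have hF : HasDerivAt (fun r => Complex.I * (ξ:ℂ) * θ r * (starRingEnd ℂ) (q r))
      (Complex.I * (ξ:ℂ) * θ' * (starRingEnd ℂ) (q t)
        + Complex.I * (ξ:ℂ) * θ t * (starRingEnd ℂ) q') t := by
    simpa [Pi.mul_def, mul_comm, mul_assoc, mul_left_comm] using (hθt.const_mul (Complex.I * (ξ:ℂ))).mul hqc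
  set D : ℂ := Complex.I * (ξ:ℂ) * θ' * (starRingEnd ℂ) (q t)
        + Complex.I * (ξ:ℂ) * θ t * (starRingEnd ℂ) q' with hD
  have hRe : HasDerivAt (fun r => (Complex.I * (ξ:ℂ) * θ r * (starRingEnd ℂ) (q r)).re) D.re t :=
    Complex.reCLM.hasFDerivAt.comp_hasDerivAt t hF
  refine ⟨τ*ρ₃ * D.re, hRe.const_mul _, ?_⟩
  have hτ0 : (τ:ℂ) ≠ 0 := by exact_mod_cast hτ.ne'
  have hρ0 : (ρ₃:ℂ) ≠ 0 := by exact_mod_cast hρ₃.ne'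
  have hid : (τ:ℂ) * (ρ₃:ℂ) * D
      = ((τ*ξ^2:ℝ):ℂ) * (q t * (starRingEnd ℂ) (q t))
        + ((τ*δ*ξ^2:ℝ):ℂ) * (y t * (starRingEnd ℂ) (q t))
        - ((ρ₃*β*ξ:ℝ):ℂ) * Complex.I * (θ t * (starRingEnd ℂ) (q t))
        - ((ρ₃*ξ^2:ℝ):ℂ) * (θ t * (starRingEnd ℂ) (θ t)) := by
    simp only [hD, hθd, hqd, map_div₀, map_sub, map_neg, map_mul, Complex.conj_I,
      Complex.conj_ofReal]
    push_cast
    field_simp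
    ring_nf
    simp only [Complex.I_sq]
    ring
  have hre := congrArg Complex.re hid
  have h2 : τ * ρ₃ * D.re = τ*ξ^2*‖q t‖^2
      + τ*δ*ξ^2*(y t * (starRingEnd ℂ) (q t)).re
      + ρ₃*β*ξ*(θ t * (starRingEnd ℂ) (q t)).im
      - ρ₃*ξ^2*‖θ t‖^2 := by
    simp only [Complex.mul_re, Complex.mul_im, Complex.add_re, Complex.sub_re,
      Complex.ofReal_re, Complex.ofReal_im, Complex.I_re, Complex.I_im,
      Complex.conj_re, Complex.conj_im, Complex.sq_norm, Complex.normSq_apply] at hre ⊢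
    linear_combination hre
  have hA : (0:ℝ) ≤ ‖θ t‖ := norm_nonneg _
  have hB : (0:ℝ) ≤ ‖q t‖ := norm_nonneg _
  have h3 : (y t * (starRingEnd ℂ) (q t)).re ≤ ‖y t‖ * ‖q t‖ := by
    calc (y t * (starRingEnd ℂ) (q t)).re ≤ ‖y t * (starRingEnd ℂ) (q t)‖ :=
          Complex.re_le_norm _
      _ = ‖y t‖ * ‖q t‖ := by rw [norm_mul, Complex.norm_conj]
  have h4 : ξ * (θ t * (starRingEnd ℂ) (q t)).im ≤ |ξ| * (‖θ t‖ * ‖q t‖) := by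
    calc ξ * (θ t * (starRingEnd ℂ) (q t)).im ≤ |ξ * (θ t * (starRingEnd ℂ) (q t)).im| :=
          le_abs_self _
      _ = |ξ| * |(θ t * (starRingEnd ℂ) (q t)).im| := abs_mul _ _
      _ ≤ |ξ| * ‖θ t * (starRingEnd ℂ) (q t)‖ := by
          gcongr
          exact Complex.abs_im_le_norm _
      _ = |ξ| * (‖θ t‖ * ‖q t‖) := by rw [norm_mul, Complex.norm_conj]
  have h0 : (0:ℝ) < 4*ε := by positivity
  have key4 : (4*ε)*(ρ₃*β*(|ξ| * (‖θ t‖*‖q t‖)))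
      ≤ (4*ε)*(ε*ρ₃*ξ^2*‖θ t‖^2 + ρ₃*β^2/(4*ε)*‖q t‖^2) := by
    have expand : (4*ε)*(ε*ρ₃*ξ^2*‖θ t‖^2 + ρ₃*β^2/(4*ε)*‖q t‖^2)
        = 4*ε^2*ρ₃*ξ^2*‖θ t‖^2 + ρ₃*β^2*‖q t‖^2 := by
      field_simp
    rw [expand, ← _root_.sq_abs ξ]
    nlinarith [mul_nonneg hρ₃.le (sq_nonneg (2*ε*|ξ| * ‖θ t‖ - β*‖q t‖))]
  have key : ρ₃*β*(|ξ| * (‖θ t‖*‖q t‖))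
      ≤ ε*ρ₃*ξ^2*‖θ t‖^2 + ρ₃*β^2/(4*ε)*‖q t‖^2 :=
    le_of_mul_le_mul_left key4 h0
  rw [h2]
  have h3' := mul_le_mul_of_nonneg_left h3 (by positivity : (0:ℝ) ≤ τ*δ*ξ^2)
  have h4' := mul_le_mul_of_nonneg_left h4 (mul_nonneg hρ₃.le hβ.le)
  have n1 : (0:ℝ) ≤ τ * ‖q t‖^2 := mul_nonneg hτ.le (sq_nonneg _)
  have n2 : (0:ℝ) ≤ ρ₃ * β^2 / (4*ε) * (ξ^2 * ‖q t‖^2) :=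
    mul_nonneg (div_nonneg (mul_nonneg hρ₃.le (sq_nonneg β)) h0.le)
      (mul_nonneg (sq_nonneg ξ) (sq_nonneg _))
  clear hre hid hD hF hRe hqc hθt hqt hθd hqd h2 h3 h4
  generalize ‖θ t‖ = A at *
  generalize ‖q t‖ = B at *
  generalize ‖y t‖ = Y at *
  generalize (y t * (starRingEnd ℂ) (q t)).re = R at *
  generalize (θ t * (starRingEnd ℂ) (q t)).im = M at *
  linarith [h3', h4', key, n1, n2]
end

section
/- Estimate for the first auxiliary functional of the Fourier-law system: set χ₀ := ρ₂ − bρ₁/k and define K₁(t) = −ρ₂ Re(v ȳ) − (aρ₁/k) Re(z ū) + (b₀ρ₁ρ₃/(kδ)) Re(θ ū). Then for every ε > 0 there exists a constant C(ε) > 0, depending only on ε and the system parameters, such that for all t ≥ 0: (d/dt)K₁(t) + k(1−ε)|v|² ≤ ρ₂|y|² + χ₀ Re(iξ ū y) + C(ε)ξ²|θ|² + C(ε)ξ⁴|∫₀^∞ g(s)η(t,s)ds|² + (b₀β̃ρ₁/(kδ))ξ²|θ||u|. -/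
open MeasureTheory Filter Complex

private lemma young8 (p c x w : ℝ) (hp : 0 < p) :
    c*x*w ≤ p/3*x^2 + 3*c^2/(4*p)*w^2 := by
  rw [← sub_nonneg]
  have h : p/3*x^2 + 3*c^2/(4*p)*w^2 - c*x*w = (2*p*x - 3*c*w)^2/(12*p) := by
    field_simp; ring
  rw [h]; positivity

private lemma mk8 (t : ℝ) (f h : ℝ → ℂ) (f' h' : ℂ) (hf : HasDerivAt f f' t)
    (hh : HasDerivAt h h' t) :
    HasDerivAt (fun r => (f r * (starRingEnd ℂ) (h r)).re)
      (f' * (starRingEnd ℂ) (h t) + f t * (starRingEnd ℂ) h').re t := by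
  have hs : HasDerivAt (fun r => (starRingEnd ℂ) (h r)) ((starRingEnd ℂ) h') t := by
    have := hh.star
    simp only [starRingEnd_apply]
    exact this
  have hmul := hf.mul hs
  exact Complex.reCLM.hasFDerivAt.comp_hasDerivAt t hmul

private lemma final8 (k ε m δ c4 c5 ξ v1 v2 u1 u2 t1 t2 G1 G2 P : ℝ)
    (hk : 0 < k) (hε : 0 < ε) (hc4 : 0 ≤ c4) (hP : -(t1*u1+t2*u2) ≤ P) :
    m*ξ^2*(v1*G1+v2*G2) - δ*ξ*(v1*t2 - v2*t1) - c4*ξ^2*(t1*u1+t2*u2)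
      - c5*ξ*(t1*v2 - t2*v1) - k*ε*(v1^2+v2^2)
    ≤ (3*m^2/(4*(k*ε)) + 3*δ^2/(4*(k*ε)) + 3*c5^2/(4*(k*ε)) + 1)*(ξ^2*(t1^2+t2^2))
      + (3*m^2/(4*(k*ε)) + 3*δ^2/(4*(k*ε)) + 3*c5^2/(4*(k*ε)) + 1)*(ξ^4*(G1^2+G2^2))
      + c4*ξ^2*P := by
  rw [← sub_nonneg]
  have hkε : (0:ℝ) < k*ε := mul_pos hk hε
  have hident : (3*m^2/(4*(k*ε)) + 3*δ^2/(4*(k*ε)) + 3*c5^2/(4*(k*ε)) + 1)*(ξ^2*(t1^2+t2^2))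
      + (3*m^2/(4*(k*ε)) + 3*δ^2/(4*(k*ε)) + 3*c5^2/(4*(k*ε)) + 1)*(ξ^4*(G1^2+G2^2))
      + c4*ξ^2*P
      - (m*ξ^2*(v1*G1+v2*G2) - δ*ξ*(v1*t2 - v2*t1) - c4*ξ^2*(t1*u1+t2*u2)
        - c5*ξ*(t1*v2 - t2*v1) - k*ε*(v1^2+v2^2))
      = ((2*(k*ε)*v1-3*(m*ξ^2)*G1)^2 + (2*(k*ε)*v2-3*(m*ξ^2)*G2)^2
        + (2*(k*ε)*v1+3*(δ*ξ)*t2)^2 + (2*(k*ε)*v2-3*(δ*ξ)*t1)^2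
        + (2*(k*ε)*v2+3*(c5*ξ)*t1)^2 + (2*(k*ε)*v1-3*(c5*ξ)*t2)^2)/(12*(k*ε))
      + c4*ξ^2*(P+(t1*u1+t2*u2)) + ξ^2*(t1^2+t2^2) + ξ^4*(G1^2+G2^2)
      + (3*m^2*(ξ^2*(t1^2+t2^2)) + (3*δ^2+3*c5^2)*(ξ^4*(G1^2+G2^2)))/(4*(k*ε)) := by
    field_simp
    ring
  rw [hident]
  have h1 : 0 ≤ c4*ξ^2*(P+(t1*u1+t2*u2)) :=
    mul_nonneg (mul_nonneg hc4 (sq_nonneg ξ)) (by linarith)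
  have h2 : 0 ≤ ((2*(k*ε)*v1-3*(m*ξ^2)*G1)^2 + (2*(k*ε)*v2-3*(m*ξ^2)*G2)^2
        + (2*(k*ε)*v1+3*(δ*ξ)*t2)^2 + (2*(k*ε)*v2-3*(δ*ξ)*t1)^2
        + (2*(k*ε)*v2+3*(c5*ξ)*t1)^2 + (2*(k*ε)*v1-3*(c5*ξ)*t2)^2)/(12*(k*ε)) := by
    positivity
  have h3 : 0 ≤ (3*m^2*(ξ^2*(t1^2+t2^2)) + (3*δ^2+3*c5^2)*(ξ^4*(G1^2+G2^2)))/(4*(k*ε)) := by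
    positivity
  have h4 : 0 ≤ ξ^2*(t1^2+t2^2) := by positivity
  have h5 : 0 ≤ ξ^4*(G1^2+G2^2) := by positivity
  linarith

set_option maxHeartbeats 1000000 in
theorem stmt8 (ρ₁ ρ₂ ρ₃ k b m δ βt k₁ k₂ b₀ : ℝ)
    (hρ₁ : 0 < ρ₁) (hρ₂ : 0 < ρ₂) (hρ₃ : 0 < ρ₃) (hk : 0 < k) (hb : 0 < b)
    (hm : 0 < m) (hδ : 0 < δ) (hβt : 0 < βt)
    (hk₁₂ : k₂ ≤ k₁) (hk₂ : 0 < k₂) (ha : 0 < b - b₀) :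
    ∀ ε : ℝ, 0 < ε → ∃ C > 0, ∀ (ξ : ℝ) (g g' : ℝ → ℝ) (v u z y θ : ℝ → ℂ) (η ηt ηs : ℝ → ℝ → ℂ),
      (∀ s, 0 ≤ s → 0 ≤ g s) →
      (∀ s, 0 ≤ s → HasDerivAt g (g' s) s) →
      (∀ s, 0 ≤ s → -k₁ * g s ≤ g' s ∧ g' s ≤ -k₂ * g s) →
      (b₀ = ∫ s in Set.Ici (0:ℝ), g s) →
      (∀ t, 0 ≤ t → HasDerivAt v (Complex.I * (ξ:ℂ) * u t - y t) t) →
      (∀ t, 0 ≤ t → HasDerivAt u (Complex.I * (k:ℂ) * (ξ:ℂ) * v t / (ρ₁:ℂ)) t) →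
      (∀ t, 0 ≤ t → HasDerivAt z (Complex.I * (ξ:ℂ) * y t) t) →
      (∀ t, 0 ≤ t → HasDerivAt y ((Complex.I * ((b - b₀ : ℝ):ℂ) * (ξ:ℂ) * z t - (m:ℂ) * (ξ:ℂ)^2 * (∫ s in Set.Ici (0:ℝ), (g s : ℂ) * η t s) + (k:ℂ) * v t - Complex.I * (δ:ℂ) * (ξ:ℂ) * θ t) / (ρ₂:ℂ)) t) →
      (∀ t, 0 ≤ t → HasDerivAt θ ((-((βt:ℂ) * (ξ:ℂ)^2 * θ t) - Complex.I * (δ:ℂ) * (ξ:ℂ) * y t) / (ρ₃:ℂ)) t) →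
      (∀ t s, 0 ≤ t → 0 ≤ s → HasDerivAt (fun r => η r s) (ηt t s) t) →
      (∀ t s, 0 ≤ t → 0 ≤ s → HasDerivAt (fun r => η t r) (ηs t s) s) →
      (Continuous (Function.uncurry ηt)) →
      (Continuous (Function.uncurry ηs)) →
      (∀ t s, 0 ≤ t → 0 ≤ s → ηt t s + ηs t s = y t) →
      (∀ t, 0 ≤ t → η t 0 = 0) →
      (∀ t, 0 ≤ t → MeasureTheory.IntegrableOn (fun s => g s * ‖η t s‖^2) (Set.Ici 0)) →
      (∀ t, 0 ≤ t → MeasureTheory.IntegrableOn (fun s => (g s : ℂ) * η t s) (Set.Ici 0)) →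
      ∀ t, 0 ≤ t → ∃ d : ℝ,
        HasDerivAt (fun r => -ρ₂ * (v r * (starRingEnd ℂ) (y r)).re - ((b - b₀)*ρ₁/k) * (z r * (starRingEnd ℂ) (u r)).re + (b₀*ρ₁*ρ₃/(k*δ)) * (θ r * (starRingEnd ℂ) (u r)).re) d t ∧
        d + k*(1-ε)*‖v t‖^2 ≤ ρ₂*‖y t‖^2 + (ρ₂ - b*ρ₁/k) * (Complex.I * (ξ:ℂ) * (starRingEnd ℂ) (u t) * y t).re + C*ξ^2*‖θ t‖^2 + C*ξ^4*‖∫ s in Set.Ici (0:ℝ), (g s : ℂ) * η t s‖^2 + (b₀*βt*ρ₁/(k*δ))*ξ^2*‖θ t‖*‖u t‖ := by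
  intro ε hε
  refine ⟨3*m^2/(4*(k*ε)) + 3*δ^2/(4*(k*ε)) + 3*(b₀*ρ₃/δ)^2/(4*(k*ε)) + 1, by positivity, ?_⟩
  intro ξ g g' v u z y θ η ηt ηs hg hgd hgb hb₀ hv hu hz hy hθ _ _ _ _ _ _ _ _ t ht
  have hb0 : 0 ≤ b₀ := by
    rw [hb₀]
    exact setIntegral_nonneg measurableSet_Ici (fun s hs => hg s hs)
  refine ⟨ρ₂*((y t).re^2+(y t).im^2) - k*((v t).re^2+(v t).im^2)
      + (ρ₂ - b*ρ₁/k)*ξ*((u t).im*(y t).re - (u t).re*(y t).im)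
      + m*ξ^2*((v t).re*(∫ s in Set.Ici (0:ℝ), (g s : ℂ) * η t s).re
               + (v t).im*(∫ s in Set.Ici (0:ℝ), (g s : ℂ) * η t s).im)
      - δ*ξ*((v t).re*(θ t).im - (v t).im*(θ t).re)
      - (b₀*βt*ρ₁/(k*δ))*ξ^2*((θ t).re*(u t).re+(θ t).im*(u t).im)
      - (b₀*ρ₃/δ)*ξ*((θ t).re*(v t).im - (θ t).im*(v t).re), ?_, ?_⟩
  · have H := (((mk8 t v y _ _ (hv t ht) (hy t ht)).const_mul (-ρ₂)).sub
      ((mk8 t z u _ _ (hz t ht) (hu t ht)).const_mul ((b-b₀)*ρ₁/k))).add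
      ((mk8 t θ u _ _ (hθ t ht) (hu t ht)).const_mul (b₀*ρ₁*ρ₃/(k*δ)))
    convert H using 1
    · rfl
    · rfl
    · rfl
    simp only [map_div₀, map_mul, map_add, map_sub, map_neg, Complex.conj_I,
      Complex.conj_ofReal, map_pow]
    simp only [Complex.mul_re, Complex.mul_im, Complex.add_re, Complex.add_im,
      Complex.sub_re, Complex.sub_im, Complex.neg_re, Complex.neg_im,
      Complex.I_re, Complex.I_im, Complex.ofReal_re, Complex.ofReal_im,
      Complex.conj_re, Complex.conj_im, Complex.div_ofReal_re, Complex.div_ofReal_im,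
      pow_two]
    field_simp
    ring
  · have habs : -((θ t).re*(u t).re+(θ t).im*(u t).im)
        ≤ ‖θ t‖ * ‖u t‖ := by
      have h1 := Complex.abs_re_le_norm (θ t * (starRingEnd ℂ) (u t))
      rw [norm_mul, Complex.norm_conj] at h1
      have h2 := neg_abs_le ((θ t * (starRingEnd ℂ) (u t)).re)
      simp only [Complex.mul_re, Complex.conj_re, Complex.conj_im] at h1 h2
      nlinarith [h1, h2]
    have hc4 : (0:ℝ) ≤ b₀*βt*ρ₁/(k*δ) := by positivity
    have key := final8 k ε m δ (b₀*βt*ρ₁/(k*δ)) (b₀*ρ₃/δ) ξ (v t).re (v t).im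
      (u t).re (u t).im (θ t).re (θ t).im
      (∫ s in Set.Ici (0:ℝ), (g s : ℂ) * η t s).re
      (∫ s in Set.Ici (0:ℝ), (g s : ℂ) * η t s).im
      (‖θ t‖ * ‖u t‖) hk hε hc4 habs
    simp only [Complex.sq_norm, Complex.normSq_apply, Complex.mul_re, Complex.mul_im,
      Complex.conj_re, Complex.conj_im, Complex.I_re, Complex.I_im,
      Complex.ofReal_re, Complex.ofReal_im]
    have hc5 : (b₀*ρ₃/δ)^2 = (b₀*ρ₃)^2/δ^2 := by rw [div_pow]
    nlinarith [key]
end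

section
/- Estimate for the second auxiliary functional of the Fourier-law system: define K₂(t) = ρ₁ Re(iξ ū v) + ρ₂ Re(iξ y z̄). Then for every ε > 0 there exists a constant C(ε) > 0, depending only on ε and the system parameters, such that for all t ≥ 0: (d/dt)K₂(t) + ρ₁(1−ε)ξ²|u|² + a(1−ε)ξ²|z|² ≤ C(ε)(1+ξ²)|v|² + C(ε)(1+ξ²)|y|² + C(ε)ξ²|θ|² + C(ε)ξ⁴|∫₀^∞ g(s)η(t,s)ds|². -/
open MeasureTheory Filter Complex

set_option maxHeartbeats 2000000



private lemma young (c a b : ℝ) (hc : 0 < c) : a * b ≤ c * a ^ 2 + b ^ 2 / (4 * c) := by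
  nlinarith [div_nonneg (sq_nonneg (2*c*a - b)) (by positivity : (0:ℝ) ≤ 4*c),
    (by field_simp; ring : c * a ^ 2 + b ^ 2 / (4 * c) - a * b = (2 * c * a - b) ^ 2 / (4 * c))]

private lemma key (ρ₁ ρ₂ k m δ a ε : ℝ)
    (hρ₁ : 0 < ρ₁) (hρ₂ : 0 < ρ₂) (hk : 0 < k) (hm : 0 < m) (hδ : 0 < δ)
    (ha : 0 < a) (hε : 0 < ε)
    (ξ u₁ u₂ v₁ v₂ z₁ z₂ y₁ y₂ p₁ p₂ G₁ G₂ : ℝ) :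
    (k*ξ^2*(v₁^2+v₂^2) - ρ₁*ξ^2*(u₁^2+u₂^2) + ρ₁*ξ*(u₁*y₂ - u₂*y₁)
      - a*ξ^2*(z₁^2+z₂^2) + ρ₂*ξ^2*(y₁^2+y₂^2)
      - m*ξ^3*(G₁*z₂ - G₂*z₁) + k*ξ*(v₁*z₂ - v₂*z₁) + δ*ξ^2*(p₁*z₁ + p₂*z₂))
      + ρ₁*(1-ε)*ξ^2*(u₁^2+u₂^2) + a*(1-ε)*ξ^2*(z₁^2+z₂^2)
    ≤ (k + ρ₂ + ρ₁/(4*ε) + 3*(k^2+δ^2+m^2)/(4*a*ε) + 1) * (1+ξ^2) * (v₁^2+v₂^2)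
    + (k + ρ₂ + ρ₁/(4*ε) + 3*(k^2+δ^2+m^2)/(4*a*ε) + 1) * (1+ξ^2) * (y₁^2+y₂^2)
    + (k + ρ₂ + ρ₁/(4*ε) + 3*(k^2+δ^2+m^2)/(4*a*ε) + 1) * ξ^2 * (p₁^2+p₂^2)
    + (k + ρ₂ + ρ₁/(4*ε) + 3*(k^2+δ^2+m^2)/(4*a*ε) + 1) * ξ^4 * (G₁^2+G₂^2) := by
  have hc2 : 0 < a*ε/(3*m) := by positivity
  have hc3 : 0 < a*ε/(3*k) := by positivity
  have hc4 : 0 < a*ε/(3*δ) := by positivity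
  set Q1 : ℝ := ρ₁/(4*ε) with hQ1
  set Q2 : ℝ := 3*k^2/(4*a*ε) with hQ2
  set Q3 : ℝ := 3*δ^2/(4*a*ε) with hQ3
  set Q4 : ℝ := 3*m^2/(4*a*ε) with hQ4
  have A1 : ρ₁*((ξ*u₁)*y₂) ≤ ρ₁*ε*(ξ*u₁)^2 + Q1*y₂^2 :=
    (mul_le_mul_of_nonneg_left (young ε (ξ*u₁) y₂ hε) hρ₁.le).trans_eq
      (by rw [hQ1]; field_simp)
  have A2 : ρ₁*((ξ*(-u₂))*y₁) ≤ ρ₁*ε*(ξ*(-u₂))^2 + Q1*y₁^2 :=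
    (mul_le_mul_of_nonneg_left (young ε (ξ*(-u₂)) y₁ hε) hρ₁.le).trans_eq
      (by rw [hQ1]; field_simp)
  have A3 : m*((ξ*z₁)*(ξ^2*G₂)) ≤ a*ε/3*(ξ*z₁)^2 + Q4*(ξ^2*G₂)^2 :=
    (mul_le_mul_of_nonneg_left (young (a*ε/(3*m)) (ξ*z₁) (ξ^2*G₂) hc2) hm.le).trans_eq
      (by rw [hQ4]; field_simp)
  have A4 : m*((ξ*z₂)*(ξ^2*(-G₁))) ≤ a*ε/3*(ξ*z₂)^2 + Q4*(ξ^2*(-G₁))^2 :=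
    (mul_le_mul_of_nonneg_left (young (a*ε/(3*m)) (ξ*z₂) (ξ^2*(-G₁)) hc2) hm.le).trans_eq
      (by rw [hQ4]; field_simp)
  have A5 : k*((ξ*z₂)*v₁) ≤ a*ε/3*(ξ*z₂)^2 + Q2*v₁^2 :=
    (mul_le_mul_of_nonneg_left (young (a*ε/(3*k)) (ξ*z₂) v₁ hc3) hk.le).trans_eq
      (by rw [hQ2]; field_simp)
  have A6 : k*((ξ*(-z₁))*v₂) ≤ a*ε/3*(ξ*(-z₁))^2 + Q2*v₂^2 :=
    (mul_le_mul_of_nonneg_left (young (a*ε/(3*k)) (ξ*(-z₁)) v₂ hc3) hk.le).trans_eq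
      (by rw [hQ2]; field_simp)
  have A7 : δ*((ξ*z₁)*(ξ*p₁)) ≤ a*ε/3*(ξ*z₁)^2 + Q3*(ξ*p₁)^2 :=
    (mul_le_mul_of_nonneg_left (young (a*ε/(3*δ)) (ξ*z₁) (ξ*p₁) hc4) hδ.le).trans_eq
      (by rw [hQ3]; field_simp)
  have A8 : δ*((ξ*z₂)*(ξ*p₂)) ≤ a*ε/3*(ξ*z₂)^2 + Q3*(ξ*p₂)^2 :=
    (mul_le_mul_of_nonneg_left (young (a*ε/(3*δ)) (ξ*z₂) (ξ*p₂) hc4) hδ.le).trans_eq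
      (by rw [hQ3]; field_simp)
  set C : ℝ := k + ρ₂ + Q1 + 3*(k^2+δ^2+m^2)/(4*a*ε) + 1 with hC
  have hQ1p : 0 ≤ Q1 := by rw [hQ1]; positivity
  have hbigp : 0 ≤ 3*(k^2+δ^2+m^2)/(4*a*ε) := by positivity
  have hd2 : 3*(k^2+δ^2+m^2)/(4*a*ε) - Q2 = 3*(δ^2+m^2)/(4*a*ε) := by rw [hQ2]; ring
  have hd3 : 3*(k^2+δ^2+m^2)/(4*a*ε) - Q3 = 3*(k^2+m^2)/(4*a*ε) := by rw [hQ3]; ring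
  have hd4 : 3*(k^2+δ^2+m^2)/(4*a*ε) - Q4 = 3*(k^2+δ^2)/(4*a*ε) := by rw [hQ4]; ring
  have hp2 : (0:ℝ) ≤ 3*(δ^2+m^2)/(4*a*ε) := by positivity
  have hp3 : (0:ℝ) ≤ 3*(k^2+m^2)/(4*a*ε) := by positivity
  have hp4 : (0:ℝ) ≤ 3*(k^2+δ^2)/(4*a*ε) := by positivity
  have hCk : k ≤ C := by rw [hC]; linarith
  have hCρ₂ : ρ₂ ≤ C := by rw [hC]; linarith
  have hQ1C : Q1 ≤ C := by rw [hC]; linarith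
  have hQ2C : Q2 ≤ C := by rw [hC]; linarith
  have hQ3C : Q3 ≤ C := by rw [hC]; linarith
  have hQ4C : Q4 ≤ C := by rw [hC]; linarith
  have B1 : k*(ξ^2*(v₁^2+v₂^2)) ≤ C*(ξ^2*(v₁^2+v₂^2)) := mul_le_mul_of_nonneg_right hCk (by positivity)
  have B2 : Q2*(v₁^2+v₂^2) ≤ C*(v₁^2+v₂^2) := mul_le_mul_of_nonneg_right hQ2C (by positivity)
  have B3 : ρ₂*(ξ^2*(y₁^2+y₂^2)) ≤ C*(ξ^2*(y₁^2+y₂^2)) := mul_le_mul_of_nonneg_right hCρ₂ (by positivity)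
  have B4 : Q1*(y₁^2+y₂^2) ≤ C*(y₁^2+y₂^2) := mul_le_mul_of_nonneg_right hQ1C (by positivity)
  have B5 : Q3*(ξ^2*(p₁^2+p₂^2)) ≤ C*(ξ^2*(p₁^2+p₂^2)) := mul_le_mul_of_nonneg_right hQ3C (by positivity)
  have B6 : Q4*(ξ^4*(G₁^2+G₂^2)) ≤ C*(ξ^4*(G₁^2+G₂^2)) := mul_le_mul_of_nonneg_right hQ4C (by positivity)
  linarith [A1, A2, A3, A4, A5, A6, A7, A8, B1, B2, B3, B4, B5, B6]

private lemma key' (ρ₁ ρ₂ k m δ a ε : ℝ)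
    (hρ₁ : 0 < ρ₁) (hρ₂ : 0 < ρ₂) (hk : 0 < k) (hm : 0 < m) (hδ : 0 < δ)
    (ha : 0 < a) (hε : 0 < ε) :
    ∃ C, 0 < C ∧ ∀ (ξ u₁ u₂ v₁ v₂ z₁ z₂ y₁ y₂ p₁ p₂ G₁ G₂ : ℝ),
    (k*ξ^2*(v₁^2+v₂^2) - ρ₁*ξ^2*(u₁^2+u₂^2) + ρ₁*ξ*(u₁*y₂ - u₂*y₁)
      - a*ξ^2*(z₁^2+z₂^2) + ρ₂*ξ^2*(y₁^2+y₂^2)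
      - m*ξ^3*(G₁*z₂ - G₂*z₁) + k*ξ*(v₁*z₂ - v₂*z₁) + δ*ξ^2*(p₁*z₁ + p₂*z₂))
      + ρ₁*(1-ε)*ξ^2*(u₁^2+u₂^2) + a*(1-ε)*ξ^2*(z₁^2+z₂^2)
    ≤ C * (1+ξ^2) * (v₁^2+v₂^2) + C * (1+ξ^2) * (y₁^2+y₂^2)
    + C * ξ^2 * (p₁^2+p₂^2) + C * ξ^4 * (G₁^2+G₂^2) :=
  ⟨k + ρ₂ + ρ₁/(4*ε) + 3*(k^2+δ^2+m^2)/(4*a*ε) + 1, by positivity,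
   fun ξ u₁ u₂ v₁ v₂ z₁ z₂ y₁ y₂ p₁ p₂ G₁ G₂ =>
     key ρ₁ ρ₂ k m δ a ε hρ₁ hρ₂ hk hm hδ ha hε ξ u₁ u₂ v₁ v₂ z₁ z₂ y₁ y₂ p₁ p₂ G₁ G₂⟩



theorem stmt9 (ρ₁ ρ₂ ρ₃ k b m δ βt k₁ k₂ b₀ : ℝ)
    (hρ₁ : 0 < ρ₁) (hρ₂ : 0 < ρ₂) (hρ₃ : 0 < ρ₃) (hk : 0 < k) (hb : 0 < b)
    (hm : 0 < m) (hδ : 0 < δ) (hβt : 0 < βt)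
    (hk₁₂ : k₂ ≤ k₁) (hk₂ : 0 < k₂) (ha : 0 < b - b₀) :
    ∀ ε : ℝ, 0 < ε → ∃ C > 0, ∀ (ξ : ℝ) (g g' : ℝ → ℝ) (v u z y θ : ℝ → ℂ) (η ηt ηs : ℝ → ℝ → ℂ),
      (∀ s, 0 ≤ s → 0 ≤ g s) →
      (∀ s, 0 ≤ s → HasDerivAt g (g' s) s) →
      (∀ s, 0 ≤ s → -k₁ * g s ≤ g' s ∧ g' s ≤ -k₂ * g s) →
      (b₀ = ∫ s in Set.Ici (0:ℝ), g s) →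
      (∀ t, 0 ≤ t → HasDerivAt v (Complex.I * (ξ:ℂ) * u t - y t) t) →
      (∀ t, 0 ≤ t → HasDerivAt u (Complex.I * (k:ℂ) * (ξ:ℂ) * v t / (ρ₁:ℂ)) t) →
      (∀ t, 0 ≤ t → HasDerivAt z (Complex.I * (ξ:ℂ) * y t) t) →
      (∀ t, 0 ≤ t → HasDerivAt y ((Complex.I * ((b - b₀ : ℝ):ℂ) * (ξ:ℂ) * z t - (m:ℂ) * (ξ:ℂ)^2 * (∫ s in Set.Ici (0:ℝ), (g s : ℂ) * η t s) + (k:ℂ) * v t - Complex.I * (δ:ℂ) * (ξ:ℂ) * θ t) / (ρ₂:ℂ)) t) →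
      (∀ t, 0 ≤ t → HasDerivAt θ ((-((βt:ℂ) * (ξ:ℂ)^2 * θ t) - Complex.I * (δ:ℂ) * (ξ:ℂ) * y t) / (ρ₃:ℂ)) t) →
      (∀ t s, 0 ≤ t → 0 ≤ s → HasDerivAt (fun r => η r s) (ηt t s) t) →
      (∀ t s, 0 ≤ t → 0 ≤ s → HasDerivAt (fun r => η t r) (ηs t s) s) →
      (Continuous (Function.uncurry ηt)) →
      (Continuous (Function.uncurry ηs)) →
      (∀ t s, 0 ≤ t → 0 ≤ s → ηt t s + ηs t s = y t) →
      (∀ t, 0 ≤ t → η t 0 = 0) →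
      (∀ t, 0 ≤ t → MeasureTheory.IntegrableOn (fun s => g s * ‖η t s‖^2) (Set.Ici 0)) →
      (∀ t, 0 ≤ t → MeasureTheory.IntegrableOn (fun s => (g s : ℂ) * η t s) (Set.Ici 0)) →
      ∀ t, 0 ≤ t → ∃ d : ℝ,
        HasDerivAt (fun r => ρ₁ * (Complex.I * (ξ:ℂ) * (starRingEnd ℂ) (u r) * v r).re + ρ₂ * (Complex.I * (ξ:ℂ) * y r * (starRingEnd ℂ) (z r)).re) d t ∧
        d + ρ₁*(1-ε)*ξ^2*‖u t‖^2 + (b - b₀)*(1-ε)*ξ^2*‖z t‖^2 ≤ C*(1+ξ^2)*‖v t‖^2 + C*(1+ξ^2)*‖y t‖^2 + C*ξ^2*‖θ t‖^2 + C*ξ^4*‖∫ s in Set.Ici (0:ℝ), (g s : ℂ) * η t s‖^2 := by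
  intro ε hε
  obtain ⟨C, hCpos, hkey⟩ := key' ρ₁ ρ₂ k m δ (b - b₀) ε hρ₁ hρ₂ hk hm hδ ha hε
  refine ⟨C, hCpos, ?_⟩
  intro ξ g g' v u z y θ η ηt ηs _ _ _ _ hv hu hz hy _ _ _ _ _ _ _ _ _ t ht
  have hvc : HasDerivAt (fun r => (starRingEnd ℂ) (u r)) ((starRingEnd ℂ) (Complex.I * (k:ℂ) * (ξ:ℂ) * v t / (ρ₁:ℂ))) t := (hu t ht).star
  have hzc : HasDerivAt (fun r => (starRingEnd ℂ) (z r)) ((starRingEnd ℂ) (Complex.I * (ξ:ℂ) * y t)) t := (hz t ht).star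
  have hP : HasDerivAt (fun r => Complex.I * (ξ:ℂ) * (starRingEnd ℂ) (u r) * v r)
      (Complex.I * (ξ:ℂ) * (starRingEnd ℂ) (Complex.I * (k:ℂ) * (ξ:ℂ) * v t / (ρ₁:ℂ)) * v t
        + Complex.I * (ξ:ℂ) * (starRingEnd ℂ) (u t) * (Complex.I * (ξ:ℂ) * u t - y t)) t := by
    have h1 := (hvc.const_mul (Complex.I * (ξ:ℂ))).mul (hv t ht)
    simpa [mul_assoc, Pi.mul_def] using h1
  have hQ : HasDerivAt (fun r => Complex.I * (ξ:ℂ) * y r * (starRingEnd ℂ) (z r))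
      (Complex.I * (ξ:ℂ) * ((Complex.I * ((b - b₀ : ℝ):ℂ) * (ξ:ℂ) * z t - (m:ℂ) * (ξ:ℂ)^2 * (∫ s in Set.Ici (0:ℝ), (g s : ℂ) * η t s) + (k:ℂ) * v t - Complex.I * (δ:ℂ) * (ξ:ℂ) * θ t) / (ρ₂:ℂ)) * (starRingEnd ℂ) (z t)
        + Complex.I * (ξ:ℂ) * y t * (starRingEnd ℂ) (Complex.I * (ξ:ℂ) * y t)) t := by
    have h1 := ((hy t ht).const_mul (Complex.I * (ξ:ℂ))).mul hzc
    simpa [mul_assoc, Pi.mul_def] using h1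
  set G : ℂ := ∫ s in Set.Ici (0:ℝ), (g s : ℂ) * η t s with hG
  have hPre : HasDerivAt (fun r => (Complex.I * (ξ:ℂ) * (starRingEnd ℂ) (u r) * v r).re)
      ((Complex.I * (ξ:ℂ) * (starRingEnd ℂ) (Complex.I * (k:ℂ) * (ξ:ℂ) * v t / (ρ₁:ℂ)) * v t
        + Complex.I * (ξ:ℂ) * (starRingEnd ℂ) (u t) * (Complex.I * (ξ:ℂ) * u t - y t)).re) t :=
    Complex.reCLM.hasFDerivAt.comp_hasDerivAt t hP
  have hQre : HasDerivAt (fun r => (Complex.I * (ξ:ℂ) * y r * (starRingEnd ℂ) (z r)).re)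
      ((Complex.I * (ξ:ℂ) * ((Complex.I * ((b - b₀ : ℝ):ℂ) * (ξ:ℂ) * z t - (m:ℂ) * (ξ:ℂ)^2 * G + (k:ℂ) * v t - Complex.I * (δ:ℂ) * (ξ:ℂ) * θ t) / (ρ₂:ℂ)) * (starRingEnd ℂ) (z t)
        + Complex.I * (ξ:ℂ) * y t * (starRingEnd ℂ) (Complex.I * (ξ:ℂ) * y t)).re) t :=
    Complex.reCLM.hasFDerivAt.comp_hasDerivAt t hQ
  have hF : HasDerivAt (fun r => ρ₁ * (Complex.I * (ξ:ℂ) * (starRingEnd ℂ) (u r) * v r).re + ρ₂ * (Complex.I * (ξ:ℂ) * y r * (starRingEnd ℂ) (z r)).re)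
      (ρ₁ * (Complex.I * (ξ:ℂ) * (starRingEnd ℂ) (Complex.I * (k:ℂ) * (ξ:ℂ) * v t / (ρ₁:ℂ)) * v t
        + Complex.I * (ξ:ℂ) * (starRingEnd ℂ) (u t) * (Complex.I * (ξ:ℂ) * u t - y t)).re
      + ρ₂ * (Complex.I * (ξ:ℂ) * ((Complex.I * ((b - b₀ : ℝ):ℂ) * (ξ:ℂ) * z t - (m:ℂ) * (ξ:ℂ)^2 * G + (k:ℂ) * v t - Complex.I * (δ:ℂ) * (ξ:ℂ) * θ t) / (ρ₂:ℂ)) * (starRingEnd ℂ) (z t)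
        + Complex.I * (ξ:ℂ) * y t * (starRingEnd ℂ) (Complex.I * (ξ:ℂ) * y t)).re) t :=
    (hPre.const_mul ρ₁).add (hQre.const_mul ρ₂)
  have hde : ρ₁ * (Complex.I * (ξ:ℂ) * (starRingEnd ℂ) (Complex.I * (k:ℂ) * (ξ:ℂ) * v t / (ρ₁:ℂ)) * v t
        + Complex.I * (ξ:ℂ) * (starRingEnd ℂ) (u t) * (Complex.I * (ξ:ℂ) * u t - y t)).re
      + ρ₂ * (Complex.I * (ξ:ℂ) * ((Complex.I * ((b - b₀ : ℝ):ℂ) * (ξ:ℂ) * z t - (m:ℂ) * (ξ:ℂ)^2 * G + (k:ℂ) * v t - Complex.I * (δ:ℂ) * (ξ:ℂ) * θ t) / (ρ₂:ℂ)) * (starRingEnd ℂ) (z t)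
        + Complex.I * (ξ:ℂ) * y t * (starRingEnd ℂ) (Complex.I * (ξ:ℂ) * y t)).re
      = (k*ξ^2*((v t).re^2+(v t).im^2) - ρ₁*ξ^2*((u t).re^2+(u t).im^2)
          + ρ₁*ξ*((u t).re*(y t).im - (u t).im*(y t).re)
          - (b-b₀)*ξ^2*((z t).re^2+(z t).im^2) + ρ₂*ξ^2*((y t).re^2+(y t).im^2)
          - m*ξ^3*(G.re*(z t).im - G.im*(z t).re)
          + k*ξ*((v t).re*(z t).im - (v t).im*(z t).re)
          + δ*ξ^2*((θ t).re*(z t).re + (θ t).im*(z t).im)) := by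
    simp only [pow_two, Complex.add_re, Complex.mul_re, Complex.mul_im,
      Complex.sub_re, Complex.sub_im, Complex.neg_re, Complex.neg_im, Complex.I_re,
      Complex.I_im, Complex.conj_re, Complex.conj_im, Complex.ofReal_re, Complex.ofReal_im,
      Complex.div_re, Complex.div_im, Complex.normSq_apply]
    field_simp
    simp only [pow_two, Complex.add_re, Complex.add_im, Complex.mul_re, Complex.mul_im,
      Complex.sub_re, Complex.sub_im, Complex.I_re, Complex.I_im, Complex.ofReal_re, Complex.ofReal_im]
    ring
  rw [hde] at hF
  refine ⟨_, hF, ?_⟩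
  have habs : ∀ w : ℂ, ‖w‖ ^ 2 = w.re^2 + w.im^2 := fun w => by
    rw [Complex.sq_norm, Complex.normSq_apply]; ring
  rw [habs (u t), habs (z t), habs (v t), habs (y t), habs (θ t), habs G]
  exact hkey ξ (u t).re (u t).im (v t).re (v t).im (z t).re (z t).im (y t).re (y t).im (θ t).re (θ t).im G.re G.im
end

section
/- Regularity-loss decay estimate from a pointwise Fourier bound, non-equal-speed case (Theorems 4.1(ii) and 4.2(ii) via Plancherel): let u₀ : ℝ → ℂ be integrable and square-integrable with Fourier transform û₀, let k, l be nonnegative integers with ∫_ℝ |ξ|^{2(k+l)}|û₀(ξ)|² dξ < ∞, and let û : [0,∞) × ℝ → ℂ be measurable with û(0,·) = û₀ and |û(t,ξ)|² ≤ M · exp(−λ·(ξ⁴/(1+ξ²)⁴)·t) · |û₀(ξ)|² for all t ≥ 0 and ξ ∈ ℝ, where M, λ > 0. Then there exists a constant C > 0, depending only on M, λ, k, l, such that for all t ≥ 0: (∫_ℝ |ξ|^{2k}|û(t,ξ)|² dξ)^{1/2} ≤ C(1+t)^{−1/8−k/4}·‖u₀‖_{L¹(ℝ)} + C(1+t)^{−l/4}·(∫_ℝ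 |ξ|^{2(k+l)}|û₀(ξ)|² dξ)^{1/2}. -/
open MeasureTheory Filter Complex


lemma abs2m (m : ℕ) (ξ : ℝ) : |ξ|^(2*m) = ξ^(2*m) := by rw [pow_mul, pow_mul, _root_.sq_abs]

lemma pow2m_nonneg (m : ℕ) (ξ : ℝ) : 0 ≤ ξ^(2*m) := by rw [pow_mul]; positivity

lemma sqrtAdd (a b : ℝ) (ha : 0 ≤ a) (hb : 0 ≤ b) :
    Real.sqrt (a+b) ≤ Real.sqrt a + Real.sqrt b := by
  rw [show a + b = (Real.sqrt a + Real.sqrt b)^2 - 2*(Real.sqrt a * Real.sqrt b) by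
    rw [add_sq, Real.sq_sqrt ha, Real.sq_sqrt hb]; ring]
  calc Real.sqrt _ ≤ Real.sqrt ((Real.sqrt a + Real.sqrt b)^2) := by
        apply Real.sqrt_le_sqrt; nlinarith [Real.sqrt_nonneg a, Real.sqrt_nonneg b]
    _ = _ := Real.sqrt_sq (by positivity)


lemma hiFreq (l : ℕ) (lam : ℝ) (hlam : 0 < lam) :
    ∃ D > 0, ∀ t : ℝ, 0 ≤ t → ∀ ξ : ℝ, 1 ≤ |ξ| →
      Real.exp (-lam * (ξ^4/(1+ξ^2)^4) * t) ≤ D * (1+t) ^ (-(l:ℝ)/2) * ξ^(2*l) := by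
  rcases Nat.eq_zero_or_pos l with hl | hl
  · refine ⟨1, one_pos, fun t ht ξ hξ => ?_⟩
    have h1 : Real.exp (-lam * (ξ^4/(1+ξ^2)^4) * t) ≤ 1 := by
      rw [Real.exp_le_one_iff]
      have h2 : 0 ≤ ξ^4/(1+ξ^2)^4 := by positivity
      nlinarith [mul_nonneg (mul_nonneg hlam.le h2) ht]
    simp [hl]
    simpa [hl] using h1
  · set D : ℝ := Real.sqrt ((1 + 8*l/lam)^l) with hD
    have hDpos : 0 < D := Real.sqrt_pos.mpr (by positivity)
    refine ⟨D, hDpos, fun t ht ξ hξ => ?_⟩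
    have hξ0 : (0:ℝ) < ξ^2 := by nlinarith [abs_nonneg ξ, _root_.sq_abs ξ]
    have hξ2 : (1:ℝ) ≤ ξ^2 := by nlinarith [_root_.sq_abs ξ, abs_nonneg ξ]
    have hξ4 : (1:ℝ) ≤ ξ^4 := by nlinarith
    have hξne : ξ ≠ 0 := by intro h; rw [h] at hξ0; simp at hξ0
    set ρ : ℝ := ξ^4/(1+ξ^2)^4 with hρ
    have hρ0 : 0 < ρ := by positivity
    have hρlb : 1/(16*ξ^4) ≤ ρ := by
      rw [hρ, div_le_div_iff₀ (by positivity) (by positivity)]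
      nlinarith [sq_nonneg (ξ^2-1), sq_nonneg ξ, sq_nonneg (ξ^4 - ξ^2)]
    set τ : ℝ := lam*t/(8*l*ξ^4) with hτdef
    have hτ0 : 0 ≤ τ := by positivity
    have hlr : (0:ℝ) < l := by exact_mod_cast hl
    -- key squared inequality
    have hξτ : ξ^4 * τ = lam*t/(8*l) := by rw [hτdef]; field_simp
    have h2 : 1 + t ≤ (1 + 8*l/lam) * ξ^4 * (1+τ) := by
      have e1 : (1 + 8*l/lam) * ξ^4 * (1+τ) =
          (1 + 8*l/lam) * ξ^4 + (1 + 8*l/lam) * (ξ^4*τ) := by ring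
      rw [e1, hξτ]
      have e2 : (1 + 8*l/lam) * (lam*t/(8*l)) = lam*t/(8*l) + t := by
        field_simp
      rw [e2]
      have : (1:ℝ) ≤ (1 + 8*l/lam) * ξ^4 := by
        have : (1:ℝ) ≤ 1 + 8*l/lam := by
          have : (0:ℝ) ≤ 8*l/lam := by positivity
          linarith
        nlinarith
      have : 0 ≤ lam*t/(8*l) := by positivity
      linarith
    have h3 : (1+τ) ≤ Real.exp τ := by linarith [Real.add_one_le_exp τ]
    have hA : Real.exp (lam * ρ * t) > 0 := Real.exp_pos _
    have key : (1+t)^l ≤ (1 + 8*l/lam)^l * ξ^(4*l) * (Real.exp (lam*ρ*t))^2 := by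
      calc (1+t)^l ≤ ((1 + 8*l/lam) * ξ^4 * (1+τ))^l := by
            apply pow_le_pow_left₀ (by linarith) h2
        _ = (1 + 8*l/lam)^l * ξ^(4*l) * (1+τ)^l := by
            rw [mul_pow, mul_pow, ← pow_mul]
        _ ≤ (1 + 8*l/lam)^l * ξ^(4*l) * (Real.exp τ)^l := by
            have h4 : (1+τ)^l ≤ (Real.exp τ)^l :=
              pow_le_pow_left₀ (by linarith) h3 l
            have h5 : 0 ≤ (1 + 8*l/lam)^l * ξ^(4*l) := by
              have : 0 ≤ ξ^(4*l) := by
                rw [show 4*l = 2*(2*l) by ring, pow_mul]; positivity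
              positivity
            exact mul_le_mul_of_nonneg_left h4 h5
        _ ≤ (1 + 8*l/lam)^l * ξ^(4*l) * (Real.exp (lam*ρ*t))^2 := by
            have h6 : (Real.exp τ)^l ≤ (Real.exp (lam*ρ*t))^2 := by
              rw [← Real.exp_nat_mul, ← Real.exp_nat_mul, Real.exp_le_exp]
              have : (l:ℝ) * τ = lam*t/(8*ξ^4) := by
                rw [hτdef]; field_simp
              rw [this]
              have := mul_le_mul_of_nonneg_left hρlb (mul_nonneg (by norm_num : (0:ℝ) ≤ 2) (mul_nonneg hlam.le ht))
              calc lam*t/(8*ξ^4) = 2*(lam*t) * (1/(16*ξ^4)) := by ring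
                _ ≤ 2*(lam*t) * ρ := this
                _ = 2*(lam*ρ*t) := by ring
            have h5 : 0 ≤ (1 + 8*l/lam)^l * ξ^(4*l) := by
              have : 0 ≤ ξ^(4*l) := by
                rw [show 4*l = 2*(2*l) by ring, pow_mul]; positivity
              positivity
            exact mul_le_mul_of_nonneg_left h6 h5
    -- now conclude
    set B : ℝ := (1+t) ^ ((l:ℝ)/2) with hB
    have hBpos : 0 < B := Real.rpow_pos_of_pos (by linarith) _
    have hB2 : B^2 = (1+t)^l := by
      rw [hB, ← Real.rpow_natCast ((1+t) ^ ((l:ℝ)/2)) 2, ← Real.rpow_mul (by linarith)]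
      norm_num
    have hD2 : D^2 = (1 + 8*l/lam)^l := Real.sq_sqrt (by positivity)
    have hstep : B ≤ D * ξ^(2*l) * Real.exp (lam*ρ*t) := by
      have hrhs0 : 0 ≤ D * ξ^(2*l) * Real.exp (lam*ρ*t) := by
        have : 0 ≤ ξ^(2*l) := by rw [pow_mul]; positivity
        positivity
      apply (pow_le_pow_iff_left₀ hBpos.le hrhs0 (two_ne_zero)).mp
      rw [hB2, mul_pow, mul_pow, hD2, ← pow_mul, show 2*l*2 = 4*l by ring]
      exact key
    have hneg : (1+t) ^ (-(l:ℝ)/2) = B⁻¹ := by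
      rw [hB, neg_div, ← Real.rpow_neg (by linarith)]
    rw [hneg]
    rw [show Real.exp (-lam * ρ * t) = (Real.exp (lam*ρ*t))⁻¹ by
      rw [← Real.exp_neg]; ring_nf]
    rw [show D * B⁻¹ * ξ^(2*l) = (D * ξ^(2*l)) / B by ring, inv_eq_one_div,
      div_le_div_iff₀ hA hBpos]
    calc 1 * B = B := one_mul B
      _ ≤ D * ξ^(2*l) * Real.exp (lam*ρ*t) := hstep


-- integrability of moment-weighted quartic gaussian
lemma quartInt (k : ℕ) (c : ℝ) (hc : 0 < c) :
    Integrable (fun η : ℝ => η^(2*k) * Real.exp (-c * η^4)) := by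
  have base : Integrable (fun x : ℝ => x ^ ((2*k : ℕ):ℝ) * Real.exp (-c * x^2)) :=
    integrable_rpow_mul_exp_neg_mul_sq hc (lt_of_lt_of_le neg_one_lt_zero (by positivity))
  simp only [Real.rpow_natCast] at base
  apply (base.const_mul (Real.exp c)).mono'
  · apply Measurable.aestronglyMeasurable
    exact (measurable_id.pow_const (2*k)).mul
      ((measurable_id.pow_const 4 |>.const_mul (-c)).exp)
  · filter_upwards with η
    have h0 : 0 ≤ η^(2*k) := by rw [pow_mul]; positivity
    rw [Real.norm_eq_abs, abs_mul, _root_.abs_of_nonneg h0, _root_.abs_of_nonneg (Real.exp_pos _).le]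
    rw [show Real.exp c * (η^(2*k) * Real.exp (-c*η^2)) = η^(2*k) * (Real.exp c * Real.exp (-c*η^2)) by ring,
       ← Real.exp_add]
    apply mul_le_mul_of_nonneg_left _ h0
    rw [Real.exp_le_exp]
    nlinarith [sq_nonneg (η^2 - 1), sq_nonneg η]

lemma loFreq (k : ℕ) (c : ℝ) (hc : 0 < c) :
    ∃ CP > 0, ∀ t : ℝ, 0 ≤ t →
      (∫ ξ : ℝ, Set.indicator (Set.Icc (-1) 1)
          (fun ξ => ξ^(2*k) * Real.exp (-(c*t)*ξ^4)) ξ)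
        ≤ CP * (1+t) ^ (-(1/4:ℝ) - (k:ℝ)/2) := by
  set J : ℝ := ∫ η : ℝ, η^(2*k) * Real.exp (-c * η^4) with hJdef
  have hJ0 : 0 ≤ J := by
    apply integral_nonneg; intro η
    have h0 : 0 ≤ η^(2*k) := by rw [pow_mul]; positivity
    positivity
  refine ⟨2^(k+2) * (J+1), by positivity, fun t ht => ?_⟩
  have h1t : (0:ℝ) < 1 + t := by linarith
  have hcont : Continuous (fun ξ : ℝ => ξ^(2*k) * Real.exp (-(c*t)*ξ^4)) := by
    continuity
  have hIccInt : Integrable (Set.indicator (Set.Icc (-1:ℝ) 1)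
      (fun ξ => ξ^(2*k) * Real.exp (-(c*t)*ξ^4))) := by
    rw [integrable_indicator_iff measurableSet_Icc]
    exact hcont.integrableOn_Icc
  rcases le_or_gt t 1 with htle | htgt
  · -- small time: bound integral by 2
    have hPle : (∫ ξ : ℝ, Set.indicator (Set.Icc (-1) 1)
          (fun ξ => ξ^(2*k) * Real.exp (-(c*t)*ξ^4)) ξ) ≤ 2 := by
      have hmono : ∀ ξ : ℝ, Set.indicator (Set.Icc (-1:ℝ) 1)
          (fun ξ => ξ^(2*k) * Real.exp (-(c*t)*ξ^4)) ξ
          ≤ Set.indicator (Set.Icc (-1:ℝ) 1) (fun _ => (1:ℝ)) ξ := by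
        intro ξ
        by_cases hmem : ξ ∈ Set.Icc (-1:ℝ) 1
        swap
        · simp [Set.indicator_of_notMem, hmem]
        rw [Set.indicator_of_mem hmem, Set.indicator_of_mem hmem]
        rw [Set.mem_Icc] at hmem
        obtain ⟨hm1, hm2⟩ := hmem
        have h1 : ξ^(2*k) ≤ 1 := by
          rw [pow_mul]
          apply pow_le_one₀ (by positivity)
          nlinarith
        have h2 : Real.exp (-(c*t)*ξ^4) ≤ 1 := by
          rw [Real.exp_le_one_iff]
          have h4 : (0:ℝ) ≤ ξ^4 := by positivity
          nlinarith [mul_nonneg (mul_nonneg hc.le ht) h4]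
        have h0 : 0 ≤ ξ^(2*k) := by rw [pow_mul]; positivity
        nlinarith
      calc _ ≤ ∫ ξ : ℝ, Set.indicator (Set.Icc (-1:ℝ) 1) (fun _ => (1:ℝ)) ξ := by
            refine integral_mono hIccInt ?_ hmono
            rw [integrable_indicator_iff measurableSet_Icc]
            exact (integrableOn_const_iff (C := (1:ℝ))).mpr (Or.inr (by simp [Real.volume_Icc]))
        _ = 2 := by
            rw [integral_indicator measurableSet_Icc, setIntegral_const, smul_eq_mul,
              mul_one, Real.volume_real_Icc]
            norm_num
    have hrp : (2:ℝ)^(-((k:ℝ)+1)) ≤ (1+t) ^ (-(1/4:ℝ) - (k:ℝ)/2) := by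
      have hb : (1+t)^((k:ℝ)+1) ≤ (2:ℝ)^((k:ℝ)+1) :=
        Real.rpow_le_rpow h1t.le (by linarith) (by positivity)
      calc (2:ℝ)^(-((k:ℝ)+1)) ≤ (1+t)^(-((k:ℝ)+1)) := by
            rw [Real.rpow_neg (by norm_num : (0:ℝ) ≤ 2), Real.rpow_neg h1t.le]
            exact inv_anti₀ (Real.rpow_pos_of_pos h1t _) hb
        _ ≤ (1+t) ^ (-(1/4:ℝ) - (k:ℝ)/2) := by
            apply Real.rpow_le_rpow_of_exponent_le (by linarith)
            linarith [Nat.cast_nonneg (α := ℝ) k]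
    calc _ ≤ (2:ℝ) := hPle
      _ ≤ 2^(k+2) * (J+1) * (2:ℝ)^(-((k:ℝ)+1)) := by
          rw [show ((2:ℝ)^(k+2) : ℝ) * (J+1) * (2:ℝ)^(-((k:ℝ)+1))
             = (J+1) * ((2:ℝ)^(k+2) * (2:ℝ)^(-((k:ℝ)+1))) by ring]
          rw [← Real.rpow_natCast 2 (k+2), ← Real.rpow_add (by norm_num)]
          have : ((k:ℝ)+2) + (-((k:ℝ)+1)) = 1 := by ring
          push_cast
          rw [show ((k:ℝ)+2) + -((k:ℝ)+1) = 1 by ring, Real.rpow_one]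
          nlinarith
      _ ≤ 2^(k+2) * (J+1) * (1+t) ^ (-(1/4:ℝ) - (k:ℝ)/2) := by
          apply mul_le_mul_of_nonneg_left hrp (by positivity)
  · -- large time
    have ht0 : 0 < t := lt_trans one_pos htgt
    set a : ℝ := t ^ ((1/4:ℝ)) with hadef
    have ha : 0 < a := Real.rpow_pos_of_pos ht0 _
    set g : ℝ → ℝ := fun η => η^(2*k) * Real.exp (-c * η^4) with hgdef
    have hak : a^(2*k) = t ^ ((k:ℝ)/2) := by
      rw [hadef, ← Real.rpow_natCast (t ^ ((1/4:ℝ))) (2*k), ← Real.rpow_mul ht0.le]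
      norm_num
      rw [show (1/4:ℝ) * (2*(k:ℝ)) = (k:ℝ)/2 by ring]
    have ha4 : a^4 = t := by
      rw [hadef, ← Real.rpow_natCast (t ^ ((1/4:ℝ))) 4, ← Real.rpow_mul ht0.le]
      norm_num
    have hcomp : ∀ ξ : ℝ, g (a * ξ) = t ^ ((k:ℝ)/2) * (ξ^(2*k) * Real.exp (-(c*t)*ξ^4)) := by
      intro ξ
      rw [hgdef]
      simp only
      rw [mul_pow, mul_pow, hak, ha4]
      ring_nf
    have hsub := MeasureTheory.Measure.integral_comp_mul_left g a
    simp_rw [hcomp] at hsub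
    rw [MeasureTheory.integral_const_mul] at hsub
    have habsa : |a⁻¹| = t ^ (-(1/4:ℝ)) := by
      rw [_root_.abs_of_pos (by positivity), hadef, ← Real.rpow_neg ht0.le]
    rw [habsa, smul_eq_mul] at hsub
    set Full : ℝ := ∫ ξ : ℝ, ξ^(2*k) * Real.exp (-(c*t)*ξ^4) with hFull
    have htk : (0:ℝ) < t ^ ((k:ℝ)/2) := Real.rpow_pos_of_pos ht0 _
    have hFullEq : Full = t ^ (-(1/4:ℝ) - (k:ℝ)/2) * J := by
      have h1 : t ^ ((k:ℝ)/2) * Full = t ^ (-(1/4:ℝ)) * J := hsub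
      have h2 : Full = (t ^ ((k:ℝ)/2))⁻¹ * (t ^ (-(1/4:ℝ)) * J) := by
        rw [← h1]; field_simp
      rw [h2, ← Real.rpow_neg ht0.le, ← mul_assoc, ← Real.rpow_add ht0]
      rw [show -((k:ℝ)/2) + -(1/4:ℝ) = -(1/4:ℝ) - (k:ℝ)/2 by ring]
    have hFullInt : Integrable (fun ξ : ℝ => ξ^(2*k) * Real.exp (-(c*t)*ξ^4)) :=
      quartInt k (c*t) (by positivity)
    have hPleF : (∫ ξ : ℝ, Set.indicator (Set.Icc (-1) 1)
          (fun ξ => ξ^(2*k) * Real.exp (-(c*t)*ξ^4)) ξ) ≤ Full := by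
      refine integral_mono hIccInt hFullInt ?_
      intro ξ
      apply Set.indicator_le_self'
      intro x _
      have h0 : 0 ≤ x^(2*k) := by rw [pow_mul]; positivity
      positivity
    -- t^{-a'} ≤ 2^{a'} (1+t)^{-a'}
    set a' : ℝ := (1/4:ℝ) + (k:ℝ)/2 with ha'def
    have ha'0 : 0 ≤ a' := by positivity
    have hta : (1+t) ^ a' ≤ 2 ^ a' * t ^ a' := by
      rw [← Real.mul_rpow (by norm_num) ht0.le]
      exact Real.rpow_le_rpow h1t.le (by linarith) ha'0
    have hinv : t ^ (-a') ≤ 2 ^ a' * (1+t) ^ (-a') := by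
      rw [Real.rpow_neg ht0.le, Real.rpow_neg h1t.le, inv_eq_one_div,
        show (2:ℝ)^a' * ((1+t)^a')⁻¹ = 2^a' / (1+t)^a' by ring,
        div_le_div_iff₀ (Real.rpow_pos_of_pos ht0 _) (Real.rpow_pos_of_pos h1t _)]
      calc 1 * (1+t)^a' = (1+t)^a' := one_mul _
        _ ≤ 2^a' * t^a' := hta
    have h2a : (2:ℝ) ^ a' ≤ 2^(k+1) := by
      rw [← Real.rpow_natCast 2 (k+1)]
      apply Real.rpow_le_rpow_of_exponent_le (by norm_num)
      push_cast
      rw [ha'def]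
      linarith [Nat.cast_nonneg (α := ℝ) k]
    calc (∫ ξ : ℝ, Set.indicator (Set.Icc (-1) 1)
          (fun ξ => ξ^(2*k) * Real.exp (-(c*t)*ξ^4)) ξ)
        ≤ Full := hPleF
      _ = t ^ (-a') * J := by rw [hFullEq, ha'def]; ring_nf
      _ ≤ (2 ^ a' * (1+t) ^ (-a')) * J := mul_le_mul_of_nonneg_right hinv hJ0
      _ ≤ (2^(k+1) * (1+t) ^ (-a')) * J := by
          have := Real.rpow_pos_of_pos h1t (-a')
          apply mul_le_mul_of_nonneg_right _ hJ0
          exact mul_le_mul_of_nonneg_right h2a this.le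
      _ ≤ 2^(k+2) * (J+1) * (1+t) ^ (-(1/4:ℝ) - (k:ℝ)/2) := by
          rw [show -a' = -(1/4:ℝ) - (k:ℝ)/2 by rw [ha'def]; ring]
          have hp := Real.rpow_pos_of_pos h1t (-(1/4:ℝ) - (k:ℝ)/2)
          have h2k : (2:ℝ)^(k+1) * J ≤ 2^(k+2) * (J+1) := by
            have h1 : (0:ℝ) < 2^(k+1) := by positivity
            have h2 : ((2:ℝ)^(k+2) : ℝ) = 2 * 2^(k+1) := by ring
            nlinarith
          calc 2^(k+1) * (1+t) ^ (-(1/4:ℝ) - (k:ℝ)/2) * J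
              = (2^(k+1) * J) * (1+t) ^ (-(1/4:ℝ) - (k:ℝ)/2) := by ring
            _ ≤ (2^(k+2) * (J+1)) * (1+t) ^ (-(1/4:ℝ) - (k:ℝ)/2) :=
                mul_le_mul_of_nonneg_right h2k hp.le


set_option maxHeartbeats 1000000 in
theorem stmt14 (k l : ℕ) (M lam : ℝ) (hM : 0 < M) (hlam : 0 < lam) :
    ∃ C > 0, ∀ (u₀ : ℝ → ℂ) (uhat : ℝ → ℝ → ℂ),
      MeasureTheory.Integrable u₀ →
      MeasureTheory.MemLp u₀ 2 →
      Measurable (Function.uncurry uhat) →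
      (∀ ξ : ℝ, uhat 0 ξ = FourierTransform.fourier u₀ ξ) →
      MeasureTheory.Integrable (fun ξ : ℝ => |ξ|^(2*(k+l)) * ‖FourierTransform.fourier u₀ ξ‖^2) →
      (∀ t, 0 ≤ t → ∀ ξ : ℝ, ‖uhat t ξ‖^2
          ≤ M * Real.exp (-lam * (ξ^4 / (1+ξ^2)^4) * t) * ‖FourierTransform.fourier u₀ ξ‖^2) →
      ∀ t, 0 ≤ t →
        Real.sqrt (∫ ξ : ℝ, |ξ|^(2*k) * ‖uhat t ξ‖^2)
          ≤ C * (1+t) ^ (-(1/8 : ℝ) - (k:ℝ)/4) * (∫ x : ℝ, ‖u₀ x‖)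
            + C * (1+t) ^ (-(l:ℝ)/4) * Real.sqrt (∫ ξ : ℝ, |ξ|^(2*(k+l)) * ‖FourierTransform.fourier u₀ ξ‖^2) := by
  have hc : (0:ℝ) < lam/16 := by positivity
  obtain ⟨CP, hCP, hLo⟩ := loFreq k (lam/16) hc
  obtain ⟨D, hD, hHi⟩ := hiFreq l lam hlam
  refine ⟨Real.sqrt (M*CP) + Real.sqrt (M*D), by positivity, ?_⟩
  intro u₀ uhat hu₀int _hu₀L2 hmeas _h0 hIntI hBound t ht
  have h1t : (0:ℝ) < 1 + t := by linarith
  simp only [abs2m] at hIntI ⊢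
  set N1 : ℝ := ∫ x : ℝ, ‖u₀ x‖ with hN1def
  have hN1 : 0 ≤ N1 := integral_nonneg fun x => norm_nonneg _
  have hF0 : ∀ ξ : ℝ, ‖FourierTransform.fourier u₀ ξ‖ ≤ N1 := by
    intro ξ
    have h := VectorFourier.norm_fourierIntegral_le_integral_norm
      Real.fourierChar volume (innerₗ ℝ) u₀ ξ
    exact h
  set R : ℝ := (1+t) ^ (-(l:ℝ)/2) with hRdef
  have hR : 0 < R := Real.rpow_pos_of_pos h1t _
  set G1 : ℝ → ℝ := fun ξ => (M*N1^2) * Set.indicator (Set.Icc (-1:ℝ) 1)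
      (fun ξ => ξ^(2*k) * Real.exp (-(lam/16*t)*ξ^4)) ξ with hG1def
  set G2 : ℝ → ℝ := fun ξ => (M*(D*R)) * (ξ^(2*(k+l)) * ‖FourierTransform.fourier u₀ ξ‖^2)
    with hG2def
  -- pointwise bound
  have hpt : ∀ ξ : ℝ, ξ^(2*k) * ‖uhat t ξ‖^2 ≤ G1 ξ + G2 ξ := by
    intro ξ
    have hb := hBound t ht ξ
    have hstep1 : ξ^(2*k) * ‖uhat t ξ‖^2
        ≤ ξ^(2*k) * (M * Real.exp (-lam * (ξ^4 / (1+ξ^2)^4) * t)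
            * ‖FourierTransform.fourier u₀ ξ‖^2) :=
      mul_le_mul_of_nonneg_left hb (pow2m_nonneg k ξ)
    rcases le_or_gt |ξ| 1 with hξ | hξ
    · -- low frequency
      have hmem : ξ ∈ Set.Icc (-1:ℝ) 1 := by
        rw [Set.mem_Icc]; constructor <;> [linarith [neg_abs_le ξ]; linarith [le_abs_self ξ]]
      have hξ2 : ξ^2 ≤ 1 := by nlinarith [_root_.sq_abs ξ, abs_nonneg ξ]
      have hexp : Real.exp (-lam * (ξ^4 / (1+ξ^2)^4) * t) ≤ Real.exp (-(lam/16*t)*ξ^4) := by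
        rw [Real.exp_le_exp]
        have h16 : (1+ξ^2)^4 ≤ 16 := by
          calc (1+ξ^2)^4 ≤ 2^4 := pow_le_pow_left₀ (by positivity) (by linarith) 4
            _ = 16 := by norm_num
        have hcc : lam/16*ξ^4 ≤ lam * (ξ^4/(1+ξ^2)^4) := by
          rw [show lam/16*ξ^4 = lam*ξ^4/16 by ring, show lam * (ξ^4/(1+ξ^2)^4) = lam*ξ^4/(1+ξ^2)^4 by ring]
          apply div_le_div_of_nonneg_left (by positivity) (by positivity) h16
        nlinarith [mul_le_mul_of_nonneg_right hcc ht]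
      have hsq : ‖FourierTransform.fourier u₀ ξ‖^2 ≤ N1^2 :=
        pow_le_pow_left₀ (norm_nonneg _) (hF0 ξ) 2
      have hG2nn : 0 ≤ G2 ξ := by
        rw [hG2def]
        have := pow2m_nonneg (k+l) ξ
        positivity
      have : ξ^(2*k) * ‖uhat t ξ‖^2
          ≤ (M*N1^2) * (ξ^(2*k) * Real.exp (-(lam/16*t)*ξ^4)) := by
        refine hstep1.trans ?_
        rw [show (M*N1^2) * (ξ^(2*k) * Real.exp (-(lam/16*t)*ξ^4))
          = ξ^(2*k) * (M * Real.exp (-(lam/16*t)*ξ^4) * N1^2) by ring]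
        apply mul_le_mul_of_nonneg_left _ (pow2m_nonneg k ξ)
        apply mul_le_mul (mul_le_mul_of_nonneg_left hexp hM.le) hsq (sq_nonneg _) (by positivity)
      calc ξ^(2*k) * ‖uhat t ξ‖^2
          ≤ (M*N1^2) * (ξ^(2*k) * Real.exp (-(lam/16*t)*ξ^4)) := this
        _ = G1 ξ := by rw [hG1def]; simp only; rw [Set.indicator_of_mem hmem]
        _ ≤ G1 ξ + G2 ξ := le_add_of_nonneg_right hG2nn
    · -- high frequency
      have hnmem : ξ ∉ Set.Icc (-1:ℝ) 1 := by
        intro hmem; rw [Set.mem_Icc] at hmem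
        have : |ξ| ≤ 1 := abs_le.mpr hmem
        linarith
      have hG1z : G1 ξ = 0 := by
        rw [hG1def]; simp only; rw [Set.indicator_of_notMem hnmem, mul_zero]
      have hexp2 := hHi t ht ξ hξ.le
      have hsq0 : (0:ℝ) ≤ ‖FourierTransform.fourier u₀ ξ‖^2 := sq_nonneg _
      have : ξ^(2*k) * ‖uhat t ξ‖^2 ≤ G2 ξ := by
        refine hstep1.trans ?_
        have hmid : M * Real.exp (-lam * (ξ^4 / (1+ξ^2)^4) * t)
              * ‖FourierTransform.fourier u₀ ξ‖^2
            ≤ M * (D * R * ξ^(2*l)) * ‖FourierTransform.fourier u₀ ξ‖^2 := by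
          apply mul_le_mul_of_nonneg_right _ hsq0
          exact mul_le_mul_of_nonneg_left hexp2 hM.le
        refine (mul_le_mul_of_nonneg_left hmid (pow2m_nonneg k ξ)).trans_eq ?_
        rw [hG2def]
        simp only
        rw [show 2*(k+l) = 2*k + 2*l by ring, pow_add]
        ring
      rw [hG1z, zero_add]
      exact this
  -- integrability
  have hcont : Continuous (fun ξ : ℝ => ξ^(2*k) * Real.exp (-(lam/16*t)*ξ^4)) :=
    (continuous_pow (2*k)).mul (Real.continuous_exp.comp (continuous_const.mul (continuous_pow 4)))
  have hIccInt : Integrable (Set.indicator (Set.Icc (-1:ℝ) 1)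
      (fun ξ => ξ^(2*k) * Real.exp (-(lam/16*t)*ξ^4))) := by
    rw [integrable_indicator_iff measurableSet_Icc]
    exact hcont.integrableOn_Icc
  have hG1int : Integrable G1 := hIccInt.const_mul _
  have hG2int : Integrable G2 := hIntI.const_mul _
  have hfmeas : Measurable (fun ξ : ℝ => ξ^(2*k) * ‖uhat t ξ‖^2) := by
    have h1 : Measurable (uhat t) := hmeas.of_uncurry_left
    exact (measurable_id.pow_const (2*k)).mul
      ((continuous_norm.measurable.comp h1).pow_const 2)
  have hfint : Integrable (fun ξ : ℝ => ξ^(2*k) * ‖uhat t ξ‖^2) := by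
    apply (hG1int.add hG2int).mono' hfmeas.aestronglyMeasurable
    filter_upwards with ξ
    rw [Real.norm_eq_abs, _root_.abs_of_nonneg (mul_nonneg (pow2m_nonneg k ξ) (sq_nonneg _))]
    exact hpt ξ
  -- integral bound
  have hIle : (∫ ξ : ℝ, ξ^(2*k) * ‖uhat t ξ‖^2) ≤ (∫ ξ, G1 ξ) + (∫ ξ, G2 ξ) := by
    rw [← integral_add hG1int hG2int]
    exact integral_mono hfint (hG1int.add hG2int) hpt
  set I : ℝ := ∫ ξ : ℝ, ξ^(2*(k+l)) * ‖FourierTransform.fourier u₀ ξ‖^2 with hIdef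
  have hI0 : 0 ≤ I := integral_nonneg fun ξ =>
    mul_nonneg (pow2m_nonneg (k+l) ξ) (sq_nonneg _)
  have hG1val : (∫ ξ, G1 ξ) ≤ (M*CP) * (1+t) ^ (-(1/4:ℝ) - (k:ℝ)/2) * N1^2 := by
    rw [hG1def]
    rw [MeasureTheory.integral_const_mul]
    calc (M*N1^2) * (∫ ξ, Set.indicator (Set.Icc (-1:ℝ) 1)
            (fun ξ => ξ^(2*k) * Real.exp (-(lam/16*t)*ξ^4)) ξ)
        ≤ (M*N1^2) * (CP * (1+t) ^ (-(1/4:ℝ) - (k:ℝ)/2)) := by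
          apply mul_le_mul_of_nonneg_left (hLo t ht) (by positivity)
      _ = (M*CP) * (1+t) ^ (-(1/4:ℝ) - (k:ℝ)/2) * N1^2 := by ring
  have hG2val : (∫ ξ, G2 ξ) = (M*D) * R * I := by
    rw [hG2def, MeasureTheory.integral_const_mul, ← hIdef]; ring
  have hkey : (∫ ξ : ℝ, ξ^(2*k) * ‖uhat t ξ‖^2)
      ≤ (M*CP) * (1+t) ^ (-(1/4:ℝ) - (k:ℝ)/2) * N1^2 + (M*D) * R * I := by
    refine hIle.trans ?_
    rw [hG2val]
    exact add_le_add_left hG1val _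
  -- sqrt step
  have hS1 : 0 ≤ (M*CP) * (1+t) ^ (-(1/4:ℝ) - (k:ℝ)/2) * N1^2 := by positivity
  have hS2 : 0 ≤ (M*D) * R * I := by positivity
  have hr1 : Real.sqrt ((M*CP) * (1+t) ^ (-(1/4:ℝ) - (k:ℝ)/2) * N1^2)
      = Real.sqrt (M*CP) * (1+t) ^ (-(1/8:ℝ) - (k:ℝ)/4) * N1 := by
    rw [Real.sqrt_mul (by positivity) (N1^2), Real.sqrt_mul (by positivity), Real.sqrt_sq hN1]
    congr 1
    congr 1
    rw [Real.sqrt_eq_rpow, ← Real.rpow_mul h1t.le]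
    congr 1
    ring
  have hr2 : Real.sqrt ((M*D) * R * I)
      = Real.sqrt (M*D) * (1+t) ^ (-(l:ℝ)/4) * Real.sqrt I := by
    rw [Real.sqrt_mul (by positivity) I, Real.sqrt_mul (by positivity)]
    congr 2
    rw [hRdef, Real.sqrt_eq_rpow, ← Real.rpow_mul h1t.le]
    congr 1
    ring
  calc Real.sqrt (∫ ξ : ℝ, ξ^(2*k) * ‖uhat t ξ‖^2)
      ≤ Real.sqrt ((M*CP) * (1+t) ^ (-(1/4:ℝ) - (k:ℝ)/2) * N1^2 + (M*D) * R * I) :=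
        Real.sqrt_le_sqrt hkey
    _ ≤ Real.sqrt ((M*CP) * (1+t) ^ (-(1/4:ℝ) - (k:ℝ)/2) * N1^2)
        + Real.sqrt ((M*D) * R * I) := sqrtAdd _ _ hS1 hS2
    _ = Real.sqrt (M*CP) * (1+t) ^ (-(1/8:ℝ) - (k:ℝ)/4) * N1
        + Real.sqrt (M*D) * (1+t) ^ (-(l:ℝ)/4) * Real.sqrt I := by rw [hr1, hr2]
    _ ≤ (Real.sqrt (M*CP) + Real.sqrt (M*D)) * (1+t) ^ (-(1/8:ℝ) - (k:ℝ)/4) * N1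
        + (Real.sqrt (M*CP) + Real.sqrt (M*D)) * (1+t) ^ (-(l:ℝ)/4) * Real.sqrt I := by
        apply add_le_add
        · apply mul_le_mul_of_nonneg_right _ hN1
          apply mul_le_mul_of_nonneg_right _ (Real.rpow_pos_of_pos h1t _).le
          linarith [Real.sqrt_nonneg (M*D)]
        · apply mul_le_mul_of_nonneg_right _ (Real.sqrt_nonneg I)
          apply mul_le_mul_of_nonneg_right _ (Real.rpow_pos_of_pos h1t _).le
          linarith [Real.sqrt_nonneg (M*CP)]
end
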